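/- arXiv:1901.07991 — 3 statements merged into one kernel-verified Lean document; each statement's English description precedes it below -/
import Mathlib

section
/- Let d ≥ 2 and 2 ≤ r ≤ d, and let ρ_r = (1/r) Σ_{l=1}^r E_{ll}. Then for any k ∈ {1,…,d} and any two distinct indices i ≠ j with 1 ≤ i, j ≤ r, the single-sample second moment of an off-diagonal entry of the A block of the covariant-measurement least squares estimator equals d(d+1)² · ∫_{U(d)} ⟨e_k, U*ρ_r U e_k⟩ · |U_{ik}|² |U_{jk}|² dU = ((r+2)/r) · ((d+1)/(d+2)). -/
open MeasureTheory ProbabilityTheory Matrix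
open scoped ComplexOrder

/-- The Borel (= product) σ-algebra on `d × d` complex matrices. -/
noncomputable instance matrixMeasurableSpace (d : ℕ) : MeasurableSpace (Matrix (Fin d) (Fin d) ℂ) :=
  MeasurableSpace.pi

/-- A density matrix: positive semidefinite with trace one. -/
def IsDensityMatrix {d : ℕ} (ρ : Matrix (Fin d) (Fin d) ℂ) : Prop :=
  ρ.PosSemidef ∧ ρ.trace = 1

/-- The rank-one projection `U E_{jj} U*`. -/
noncomputable def covProj (d : ℕ) (j : Fin d) (U : Matrix.unitaryGroup (Fin d) ℂ) :
    Matrix (Fin d) (Fin d) ℂ :=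
  (U : Matrix (Fin d) (Fin d) ℂ) * Matrix.single j j 1 *
    star (U : Matrix (Fin d) (Fin d) ℂ)

/-- The outcome law `μ_ρ` of the covariant measurement on the state `ρ`, built from the Haar
probability measure `μ` on the unitary group: the distribution of `U E_{JJ} U*` where `U ~ μ`
and, conditionally on `U`, `J = j` has probability `⟨e_j, U* ρ U e_j⟩`. -/
noncomputable def covariantLaw (d : ℕ) (μ : Measure (Matrix.unitaryGroup (Fin d) ℂ))
    (ρ : Matrix (Fin d) (Fin d) ℂ) : Measure (Matrix (Fin d) (Fin d) ℂ) :=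
  Measure.sum fun j : Fin d =>
    Measure.map (covProj d j)
      (μ.withDensity fun U =>
        ENNReal.ofReal
          ((star (U : Matrix (Fin d) (Fin d) ℂ) * ρ * (U : Matrix (Fin d) (Fin d) ℂ)) j j).re)

/-- The least squares estimator `ρ̂_LS = (1/N) Σ_i ((d+1) P_i - I)`. -/
noncomputable def lsEst {Ω : Type*} (d N : ℕ) (P : Fin N → Ω → Matrix (Fin d) (Fin d) ℂ)
    (ω : Ω) : Matrix (Fin d) (Fin d) ℂ :=
  (N : ℂ)⁻¹ • ∑ i, ((d + 1 : ℂ) • P i ω - 1)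

/-- Squared Frobenius norm `‖A‖₂² = Tr(A* A)`. -/
noncomputable def frobSq {d : ℕ} (A : Matrix (Fin d) (Fin d) ℂ) : ℝ :=
  (Matrix.trace (Aᴴ * A)).re

/-- Frobenius norm `‖A‖₂ = (Tr(A* A))^{1/2}`. -/
noncomputable def frobNorm {d : ℕ} (A : Matrix (Fin d) (Fin d) ℂ) : ℝ :=
  Real.sqrt (Matrix.trace (Aᴴ * A)).re

/-- Operator norm (largest singular value) of a matrix, as the `ℓ² → ℓ²` operator norm. -/
noncomputable def opNorm {d : ℕ} (A : Matrix (Fin d) (Fin d) ℂ) : ℝ :=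
  ‖LinearMap.toContinuousLinearMap (Matrix.toEuclideanLin A)‖

/-- Trace norm `‖A‖₁ = Tr|A|`: the sum of the singular values of `A`. -/
noncomputable def traceNorm {d : ℕ} (A : Matrix (Fin d) (Fin d) ℂ) : ℝ :=
  ∑ i, Real.sqrt ((Matrix.posSemidef_conjTranspose_mul_self A).1.eigenvalues i)

/-- The rank-`r` density matrix `ρ_r = (1/r) Σ_{i=1}^r E_{ii}`. -/
noncomputable def rhoR (d r : ℕ) : Matrix (Fin d) (Fin d) ℂ :=
  (r : ℂ)⁻¹ • ∑ i : Fin d, if (i : ℕ) < r then Matrix.single i i 1 else 0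

namespace CovAux
variable {d : ℕ}

/-- `X k l U = ‖U_{l k}‖²`. -/
noncomputable def X (k l : Fin d) (U : Matrix.unitaryGroup (Fin d) ℂ) : ℝ :=
  ‖(U : Matrix (Fin d) (Fin d) ℂ) l k‖ ^ 2

lemma X_nonneg (k l : Fin d) (U) : 0 ≤ X k l U := by unfold X; positivity

lemma measurable_entry (l k : Fin d) :
    Measurable (fun U : Matrix.unitaryGroup (Fin d) ℂ => (U : Matrix (Fin d) (Fin d) ℂ) l k) := by
  have h1 : Measurable (fun U : Matrix.unitaryGroup (Fin d) ℂ => (U : Matrix (Fin d) (Fin d) ℂ)) :=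
    measurable_subtype_coe
  exact (measurable_pi_apply k).comp ((measurable_pi_apply l).comp h1)

lemma measurable_X (k l : Fin d) : Measurable (X k l) :=
  ((measurable_entry l k).norm).pow_const 2

lemma sum_X (k : Fin d) (U : Matrix.unitaryGroup (Fin d) ℂ) :
    ∑ l : Fin d, X k l U = 1 := by
  have h := Matrix.UnitaryGroup.star_mul_self U
  have h2 := congrArg (fun M : Matrix (Fin d) (Fin d) ℂ => (M k k).re) h
  simp only [Matrix.mul_apply, Matrix.star_apply, Matrix.one_apply_eq] at h2
  rw [Complex.one_re] at h2
  rw [← h2, Complex.re_sum]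
  refine Finset.sum_congr rfl fun l _ => ?_
  rw [RCLike.star_def, ← Complex.normSq_eq_conj_mul_self]
  simp only [Complex.normSq_eq_norm_sq, X]
  norm_cast

lemma X_le_one (k l : Fin d) (U) : X k l U ≤ 1 := by
  have := sum_X k U
  have h := Finset.single_le_sum (f := fun l => X k l U) (fun m _ => X_nonneg k m U)
    (Finset.mem_univ l)
  linarith



/-- Embed a 2×2 matrix `(p q; r s)` at positions `(a, b)` in the identity matrix. -/
def emb (a b : Fin d) (p q r s : ℂ) : Matrix (Fin d) (Fin d) ℂ := fun l m =>
  if l = a then ((if m = a then p else 0) + (if m = b then q else 0))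
  else if l = b then ((if m = a then r else 0) + (if m = b then s else 0))
  else if l = m then 1 else 0

lemma emb_mul_apply_a {a b : Fin d} (hab : a ≠ b) (p q r s : ℂ)
    (U : Matrix (Fin d) (Fin d) ℂ) (k : Fin d) :
    (emb a b p q r s * U) a k = p * U a k + q * U b k := by
  rw [Matrix.mul_apply]
  simp only [emb, if_pos rfl, add_mul, ite_mul, zero_mul,
    Finset.sum_add_distrib, Finset.sum_ite_eq', Finset.mem_univ, if_true]

lemma emb_mul_apply_b {a b : Fin d} (hab : a ≠ b) (p q r s : ℂ)
    (U : Matrix (Fin d) (Fin d) ℂ) (k : Fin d) :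
    (emb a b p q r s * U) b k = r * U a k + s * U b k := by
  rw [Matrix.mul_apply]
  simp only [emb, if_neg hab.symm, if_pos rfl, add_mul, ite_mul, zero_mul,
    Finset.sum_add_distrib, Finset.sum_ite_eq', Finset.mem_univ, if_true]

lemma emb_mul_apply_other {a b l : Fin d} (hla : l ≠ a) (hlb : l ≠ b) (p q r s : ℂ)
    (U : Matrix (Fin d) (Fin d) ℂ) (k : Fin d) :
    (emb a b p q r s * U) l k = U l k := by
  rw [Matrix.mul_apply]
  have : ∀ m : Fin d, emb a b p q r s l m * U m k = if m = l then U l k else 0 := by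
    intro m
    simp only [emb, if_neg hla, if_neg hlb]
    by_cases h : m = l
    · rw [if_pos h.symm, if_pos h, h, one_mul]
    · rw [if_neg (fun hh : l = m => h hh.symm), if_neg h, zero_mul]
  simp only [this, Finset.sum_ite_eq', Finset.mem_univ, if_true]

set_option maxHeartbeats 1600000 in
lemma emb_mem {a b : Fin d} (hab : a ≠ b) (p q r s : ℂ)
    (h1 : starRingEnd ℂ p * p + starRingEnd ℂ r * r = 1)
    (h2 : starRingEnd ℂ q * q + starRingEnd ℂ s * s = 1)
    (h3 : starRingEnd ℂ p * q + starRingEnd ℂ r * s = 0) :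
    emb a b p q r s ∈ Matrix.unitaryGroup (Fin d) ℂ := by
  have h3' : starRingEnd ℂ q * p + starRingEnd ℂ s * r = 0 := by
    have := congrArg (starRingEnd ℂ) h3
    simp only [_root_.map_mul, map_add, map_zero, Complex.conj_conj] at this
    linear_combination this
  rw [Matrix.mem_unitaryGroup_iff']
  ext m m'
  rw [Matrix.mul_apply]
  have key : ∀ l : Fin d, (star (emb a b p q r s)) m l * emb a b p q r s l m'
      = starRingEnd ℂ (emb a b p q r s l m) * emb a b p q r s l m' := by
    intro l; rw [Matrix.star_apply]; rfl
  simp only [key]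
  have hsplit : (∑ l : Fin d, starRingEnd ℂ (emb a b p q r s l m) * emb a b p q r s l m')
      = starRingEnd ℂ (emb a b p q r s a m) * emb a b p q r s a m'
      + starRingEnd ℂ (emb a b p q r s b m) * emb a b p q r s b m'
      + ∑ l ∈ (Finset.univ.erase a).erase b,
          starRingEnd ℂ (emb a b p q r s l m) * emb a b p q r s l m' := by
    rw [← Finset.add_sum_erase _ _ (Finset.mem_univ a)]
    rw [← Finset.add_sum_erase _ _ (Finset.mem_erase.2 ⟨hab.symm, Finset.mem_univ b⟩)]
    rw [Finset.erase_right_comm]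
    ring
  rw [hsplit]
  have htail : ∑ l ∈ (Finset.univ.erase a).erase b,
      starRingEnd ℂ (emb a b p q r s l m) * emb a b p q r s l m'
      = if m = m' then (if m = a then 0 else if m = b then 0 else 1) else 0 := by
    have hcong : ∀ l ∈ (Finset.univ.erase a).erase b,
        starRingEnd ℂ (emb a b p q r s l m) * emb a b p q r s l m'
        = if l = m then (if m = m' then (if m = a then 0 else if m = b then 0 else 1) else 0)
          else 0 := by
      intro l hl
      have hlb : l ≠ b := (Finset.mem_erase.1 hl).1
      have hla : l ≠ a := (Finset.mem_erase.1 ((Finset.mem_erase.1 hl).2)).1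
      simp only [emb, if_neg hla, if_neg hlb]
      by_cases h : l = m
      · have hma : m ≠ a := h ▸ hla
        have hmb : m ≠ b := h ▸ hlb
        by_cases h' : m = m'
        · simp [h, ← h', hma, hmb]
        · simp [h, h', fun hh : l = m' => h' (h.symm.trans hh)]
      · simp [h, fun hh : m = l => h hh.symm]
    rw [Finset.sum_congr rfl hcong, Finset.sum_ite_eq']
    by_cases hm : m ∈ (Finset.univ.erase a).erase b
    · rw [if_pos hm]
    · rw [if_neg hm]
      have : m = a ∨ m = b := by
        by_contra hc
        push_neg at hc
        exact hm (Finset.mem_erase.2 ⟨hc.2, Finset.mem_erase.2 ⟨hc.1, Finset.mem_univ m⟩⟩)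
      rcases this with h | h <;> simp [h, hab, hab.symm]
  rw [htail]
  have hone : (1 : Matrix (Fin d) (Fin d) ℂ) m m' = if m = m' then 1 else 0 :=
    Matrix.one_apply
  rw [hone]
  simp only [emb, if_pos rfl, if_neg hab.symm, map_add, apply_ite (starRingEnd ℂ), map_zero,
    add_mul, mul_add, ite_mul, mul_ite, mul_zero, zero_mul]
  split_ifs <;>
    first
      | linear_combination h1
      | linear_combination h2
      | linear_combination h3
      | linear_combination h3'
      | simp_all
      | tauto

/-- The coercion of a product in the unitary group. -/
lemma coe_mulU (V U : Matrix.unitaryGroup (Fin d) ℂ) :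
    ((V * U : Matrix.unitaryGroup (Fin d) ℂ) : Matrix (Fin d) (Fin d) ℂ)
      = (V : Matrix (Fin d) (Fin d) ℂ) * (U : Matrix (Fin d) (Fin d) ℂ) := rfl

lemma measurable_mulL (V : Matrix.unitaryGroup (Fin d) ℂ) :
    Measurable (fun U : Matrix.unitaryGroup (Fin d) ℂ => V * U) := by
  have hmat : Measurable (fun U : Matrix.unitaryGroup (Fin d) ℂ =>
      (V : Matrix (Fin d) (Fin d) ℂ) * (U : Matrix (Fin d) (Fin d) ℂ)) := by
    apply measurable_pi_lambda
    intro l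
    apply measurable_pi_lambda
    intro m
    simp only [Matrix.mul_apply]
    exact Finset.measurable_sum _ fun n _ => (measurable_entry n m).const_mul _
  exact Measurable.subtype_mk hmat

lemma integral_comp_mulL (μ : Measure (Matrix.unitaryGroup (Fin d) ℂ))
    (hμ : ∀ V : Matrix.unitaryGroup (Fin d) ℂ, μ.map (fun U => V * U) = μ)
    (V : Matrix.unitaryGroup (Fin d) ℂ) (F : Matrix.unitaryGroup (Fin d) ℂ → ℝ)
    (hF : AEStronglyMeasurable F μ) :
    ∫ U, F (V * U) ∂μ = ∫ U, F U ∂μ := by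
  conv_rhs => rw [← hμ V]
  rw [integral_map (measurable_mulL V).aemeasurable (by rwa [hμ V])]

/-- The swap unitary. -/
noncomputable def swapU (a b : Fin d) (hab : a ≠ b) : Matrix.unitaryGroup (Fin d) ℂ :=
  ⟨emb a b 0 1 1 0, emb_mem hab 0 1 1 0 (by simp) (by simp) (by simp)⟩

noncomputable def cc : ℂ := ((Real.sqrt 2)⁻¹ : ℝ)

lemma cc_conj : starRingEnd ℂ cc = cc := Complex.conj_ofReal _

lemma cc_sq : cc * cc = (2 : ℂ)⁻¹ := by
  unfold cc
  rw [← Complex.ofReal_mul, ← mul_inv, Real.mul_self_sqrt (by norm_num)]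
  norm_num

/-- Real rotation (Hadamard-type) unitary at `(a,b)`. -/
noncomputable def hU (a b : Fin d) (hab : a ≠ b) : Matrix.unitaryGroup (Fin d) ℂ :=
  ⟨emb a b cc cc (-cc) cc, emb_mem hab _ _ _ _
    (by rw [cc_conj]; simp only [map_neg, cc_conj]; linear_combination 2 * cc_sq)
    (by rw [cc_conj]; linear_combination 2 * cc_sq)
    (by simp only [map_neg, cc_conj]; ring)⟩

/-- Complex rotation unitary at `(a,b)`. -/
noncomputable def gU (a b : Fin d) (hab : a ≠ b) : Matrix.unitaryGroup (Fin d) ℂ :=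
  ⟨emb a b cc (cc * Complex.I) (cc * Complex.I) cc, emb_mem hab _ _ _ _
    (by simp only [_root_.map_mul, cc_conj, Complex.conj_I]
        linear_combination (1 - Complex.I * Complex.I) * cc_sq - (1 / 2 : ℂ) * Complex.I_mul_I)
    (by simp only [_root_.map_mul, cc_conj, Complex.conj_I]
        linear_combination (1 - Complex.I * Complex.I) * cc_sq - (1 / 2 : ℂ) * Complex.I_mul_I)
    (by simp only [_root_.map_mul, cc_conj, Complex.conj_I]; ring)⟩

lemma X_swap {a b : Fin d} (hab : a ≠ b) (k l : Fin d) (U : Matrix.unitaryGroup (Fin d) ℂ) :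
    X k l (swapU a b hab * U) = X k (Equiv.swap a b l) U := by
  unfold X
  rw [coe_mulU]
  rcases eq_or_ne l a with rfl | hla
  · rw [Equiv.swap_apply_left]
    show ‖(emb l b 0 1 1 0 * (U : Matrix (Fin d) (Fin d) ℂ)) l k‖ ^ 2 = _
    rw [emb_mul_apply_a hab]
    simp
  · rcases eq_or_ne l b with rfl | hlb
    · rw [Equiv.swap_apply_right]
      show ‖(emb a l 0 1 1 0 * (U : Matrix (Fin d) (Fin d) ℂ)) l k‖ ^ 2 = _
      rw [emb_mul_apply_b hab]
      simp
    · rw [Equiv.swap_apply_of_ne_of_ne hla hlb]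
      show ‖(emb a b 0 1 1 0 * (U : Matrix (Fin d) (Fin d) ℂ)) l k‖ ^ 2 = _
      rw [emb_mul_apply_other hla hlb]

lemma norm_cc_sq : ‖cc‖ ^ 2 = 1 / 2 := by
  unfold cc
  rw [Complex.norm_real, Real.norm_eq_abs, sq_abs, ← Real.sqrt_inv]
  rw [Real.sq_sqrt (by norm_num)]
  norm_num

lemma norm_sq_eq (z : ℂ) : ‖z‖ ^ 2 = z.re ^ 2 + z.im ^ 2 := by
  rw [Complex.sq_norm, Complex.normSq_apply]; ring

lemma keyB (u v : ℂ) :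
    ‖u + v‖ ^ 2 * ‖v - u‖ ^ 2 + ‖u + Complex.I * v‖ ^ 2 * ‖Complex.I * u + v‖ ^ 2
      = 2 * ((‖u‖ ^ 2) ^ 2 + (‖v‖ ^ 2) ^ 2) := by
  simp only [norm_sq_eq, Complex.add_re, Complex.add_im, Complex.sub_re, Complex.sub_im,
    Complex.mul_re, Complex.mul_im, Complex.I_re, Complex.I_im]
  ring

lemma keyC (u v : ℂ) :
    ‖u + v‖ ^ 2 * ‖v - u‖ ^ 2 * (‖u + v‖ ^ 2 + ‖v - u‖ ^ 2)
      + ‖u + Complex.I * v‖ ^ 2 * ‖Complex.I * u + v‖ ^ 2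
          * (‖u + Complex.I * v‖ ^ 2 + ‖Complex.I * u + v‖ ^ 2)
      = 4 * ((‖u‖ ^ 2) ^ 2 + (‖v‖ ^ 2) ^ 2) * (‖u‖ ^ 2 + ‖v‖ ^ 2) := by
  simp only [norm_sq_eq, Complex.add_re, Complex.add_im, Complex.sub_re, Complex.sub_im,
    Complex.mul_re, Complex.mul_im, Complex.I_re, Complex.I_im]
  ring

lemma X_hU_a {a b : Fin d} (hab : a ≠ b) (k : Fin d) (U : Matrix.unitaryGroup (Fin d) ℂ) :
    X k a (hU a b hab * U)
      = ‖cc‖ ^ 2 * ‖(U : Matrix (Fin d) (Fin d) ℂ) a k + (U : Matrix (Fin d) (Fin d) ℂ) b k‖ ^ 2 := by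
  unfold X
  rw [coe_mulU]
  show ‖(emb a b cc cc (-cc) cc * (U : Matrix (Fin d) (Fin d) ℂ)) a k‖ ^ 2 = _
  rw [emb_mul_apply_a hab]
  rw [show cc * (U : Matrix (Fin d) (Fin d) ℂ) a k + cc * (U : Matrix (Fin d) (Fin d) ℂ) b k
    = cc * ((U : Matrix (Fin d) (Fin d) ℂ) a k + (U : Matrix (Fin d) (Fin d) ℂ) b k) by ring]
  rw [norm_mul, mul_pow]

lemma X_hU_b {a b : Fin d} (hab : a ≠ b) (k : Fin d) (U : Matrix.unitaryGroup (Fin d) ℂ) :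
    X k b (hU a b hab * U)
      = ‖cc‖ ^ 2 * ‖(U : Matrix (Fin d) (Fin d) ℂ) b k - (U : Matrix (Fin d) (Fin d) ℂ) a k‖ ^ 2 := by
  unfold X
  rw [coe_mulU]
  show ‖(emb a b cc cc (-cc) cc * (U : Matrix (Fin d) (Fin d) ℂ)) b k‖ ^ 2 = _
  rw [emb_mul_apply_b hab]
  rw [show -cc * (U : Matrix (Fin d) (Fin d) ℂ) a k + cc * (U : Matrix (Fin d) (Fin d) ℂ) b k
    = cc * ((U : Matrix (Fin d) (Fin d) ℂ) b k - (U : Matrix (Fin d) (Fin d) ℂ) a k) by ring]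
  rw [norm_mul, mul_pow]

lemma X_gU_a {a b : Fin d} (hab : a ≠ b) (k : Fin d) (U : Matrix.unitaryGroup (Fin d) ℂ) :
    X k a (gU a b hab * U)
      = ‖cc‖ ^ 2 * ‖(U : Matrix (Fin d) (Fin d) ℂ) a k
          + Complex.I * (U : Matrix (Fin d) (Fin d) ℂ) b k‖ ^ 2 := by
  unfold X
  rw [coe_mulU]
  show ‖(emb a b cc (cc * Complex.I) (cc * Complex.I) cc * (U : Matrix (Fin d) (Fin d) ℂ)) a k‖ ^ 2 = _
  rw [emb_mul_apply_a hab]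
  rw [show cc * (U : Matrix (Fin d) (Fin d) ℂ) a k
        + cc * Complex.I * (U : Matrix (Fin d) (Fin d) ℂ) b k
    = cc * ((U : Matrix (Fin d) (Fin d) ℂ) a k
        + Complex.I * (U : Matrix (Fin d) (Fin d) ℂ) b k) by ring]
  rw [norm_mul, mul_pow]

lemma X_gU_b {a b : Fin d} (hab : a ≠ b) (k : Fin d) (U : Matrix.unitaryGroup (Fin d) ℂ) :
    X k b (gU a b hab * U)
      = ‖cc‖ ^ 2 * ‖Complex.I * (U : Matrix (Fin d) (Fin d) ℂ) a k
          + (U : Matrix (Fin d) (Fin d) ℂ) b k‖ ^ 2 := by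
  unfold X
  rw [coe_mulU]
  show ‖(emb a b cc (cc * Complex.I) (cc * Complex.I) cc * (U : Matrix (Fin d) (Fin d) ℂ)) b k‖ ^ 2 = _
  rw [emb_mul_apply_b hab]
  rw [show cc * Complex.I * (U : Matrix (Fin d) (Fin d) ℂ) a k
        + cc * (U : Matrix (Fin d) (Fin d) ℂ) b k
    = cc * (Complex.I * (U : Matrix (Fin d) (Fin d) ℂ) a k
        + (U : Matrix (Fin d) (Fin d) ℂ) b k) by ring]
  rw [norm_mul, mul_pow]

/-- pointwise identity for the fourth-moment relation -/
lemma pt4 {a b : Fin d} (hab : a ≠ b) (k : Fin d) (U : Matrix.unitaryGroup (Fin d) ℂ) :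
    X k a (hU a b hab * U) * X k b (hU a b hab * U)
      + X k a (gU a b hab * U) * X k b (gU a b hab * U)
      = ((X k a U) ^ 2 + (X k b U) ^ 2) / 2 := by
  rw [X_hU_a hab, X_hU_b hab, X_gU_a hab, X_gU_b hab, norm_cc_sq]
  have h := keyB ((U : Matrix (Fin d) (Fin d) ℂ) a k) ((U : Matrix (Fin d) (Fin d) ℂ) b k)
  unfold X
  nlinarith [h]

/-- pointwise identity for the sixth-moment relation -/
lemma pt6 {a b : Fin d} (hab : a ≠ b) (k : Fin d) (U : Matrix.unitaryGroup (Fin d) ℂ) :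
    X k a (hU a b hab * U) * X k b (hU a b hab * U)
        * (X k a (hU a b hab * U) + X k b (hU a b hab * U))
      + X k a (gU a b hab * U) * X k b (gU a b hab * U)
        * (X k a (gU a b hab * U) + X k b (gU a b hab * U))
      = ((X k a U) ^ 2 + (X k b U) ^ 2) * (X k a U + X k b U) / 2 := by
  rw [X_hU_a hab, X_hU_b hab, X_gU_a hab, X_gU_b hab, norm_cc_sq]
  have h := keyC ((U : Matrix (Fin d) (Fin d) ℂ) a k) ((U : Matrix (Fin d) (Fin d) ℂ) b k)
  unfold X
  nlinarith [h]

section Moments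

variable {d : ℕ} (μ : Measure (Matrix.unitaryGroup (Fin d) ℂ)) [IsProbabilityMeasure μ]
  (k : Fin d)

lemma integrable_bdd {F : Matrix.unitaryGroup (Fin d) ℂ → ℝ} (hm : Measurable F)
    {C : ℝ} (hb : ∀ U, ‖F U‖ ≤ C) : Integrable F μ :=
  ⟨hm.aestronglyMeasurable, HasFiniteIntegral.of_bounded (ae_of_all _ hb)⟩

noncomputable def J1 (a : Fin d) : ℝ := ∫ U, X k a U ∂μ
noncomputable def J2 (a b : Fin d) : ℝ := ∫ U, X k a U * X k b U ∂μ
noncomputable def J3 (a b c : Fin d) : ℝ := ∫ U, X k a U * X k b U * X k c U ∂μ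

lemma int1 (a : Fin d) : Integrable (fun U => X k a U) μ :=
  integrable_bdd μ (measurable_X k a) (C := 1) fun U => by
    rw [Real.norm_eq_abs, abs_of_nonneg (X_nonneg k a U)]; exact X_le_one k a U

lemma int2 (a b : Fin d) : Integrable (fun U => X k a U * X k b U) μ :=
  integrable_bdd μ ((measurable_X k a).mul (measurable_X k b)) (C := 1) fun U => by
    rw [Real.norm_eq_abs, abs_of_nonneg (mul_nonneg (X_nonneg k a U) (X_nonneg k b U))]
    nlinarith [X_nonneg k a U, X_le_one k a U, X_nonneg k b U, X_le_one k b U]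

lemma int3 (a b c : Fin d) : Integrable (fun U => X k a U * X k b U * X k c U) μ :=
  integrable_bdd μ (((measurable_X k a).mul (measurable_X k b)).mul (measurable_X k c))
    (C := 1) fun U => by
    rw [Real.norm_eq_abs, abs_of_nonneg
      (mul_nonneg (mul_nonneg (X_nonneg k a U) (X_nonneg k b U)) (X_nonneg k c U))]
    have hab2 : X k a U * X k b U ≤ 1 := by
      nlinarith [X_nonneg k a U, X_le_one k a U, X_nonneg k b U, X_le_one k b U]
    nlinarith [mul_nonneg (X_nonneg k a U) (X_nonneg k b U), X_nonneg k c U, X_le_one k c U,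
      hab2]

lemma int2comp (V : Matrix.unitaryGroup (Fin d) ℂ) (a b : Fin d) :
    Integrable (fun U => X k a (V * U) * X k b (V * U)) μ := by
  refine integrable_bdd μ ?_ (C := 1) fun U => ?_
  · exact (((measurable_X k a).comp (measurable_mulL V)).mul
      ((measurable_X k b).comp (measurable_mulL V)))
  · rw [Real.norm_eq_abs, abs_of_nonneg (mul_nonneg (X_nonneg k a _) (X_nonneg k b _))]
    nlinarith [X_nonneg k a (V * U), X_le_one k a (V * U), X_nonneg k b (V * U),
      X_le_one k b (V * U)]

lemma int3comp (V : Matrix.unitaryGroup (Fin d) ℂ) (a b : Fin d) :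
    Integrable (fun U => X k a (V * U) * X k b (V * U) * (X k a (V * U) + X k b (V * U))) μ := by
  refine integrable_bdd μ ?_ (C := 2) fun U => ?_
  · exact ((((measurable_X k a).comp (measurable_mulL V)).mul
      ((measurable_X k b).comp (measurable_mulL V))).mul
      (((measurable_X k a).comp (measurable_mulL V)).add
        ((measurable_X k b).comp (measurable_mulL V))))
  · rw [Real.norm_eq_abs, abs_of_nonneg (mul_nonneg (mul_nonneg (X_nonneg k a _)
      (X_nonneg k b _)) (add_nonneg (X_nonneg k a _) (X_nonneg k b _)))]
    have hab2 : X k a (V * U) * X k b (V * U) ≤ 1 := by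
      nlinarith [X_nonneg k a (V * U), X_le_one k a (V * U), X_nonneg k b (V * U),
        X_le_one k b (V * U)]
    have hsum0 : 0 ≤ X k a (V * U) + X k b (V * U) :=
      add_nonneg (X_nonneg k a (V * U)) (X_nonneg k b (V * U))
    have hsum2 : X k a (V * U) + X k b (V * U) ≤ 2 := by
      linarith [X_le_one k a (V * U), X_le_one k b (V * U)]
    calc X k a (V * U) * X k b (V * U) * (X k a (V * U) + X k b (V * U))
        ≤ 1 * (X k a (V * U) + X k b (V * U)) :=
          mul_le_mul_of_nonneg_right hab2 hsum0
      _ ≤ 2 := by linarith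

lemma J1_swap (hμ : ∀ V : Matrix.unitaryGroup (Fin d) ℂ, μ.map (fun U => V * U) = μ)
    {a b : Fin d} (hab : a ≠ b) (x : Fin d) :
    J1 μ k (Equiv.swap a b x) = J1 μ k x := by
  unfold J1
  rw [← integral_comp_mulL μ hμ (swapU a b hab) (fun U => X k (Equiv.swap a b x) U)
    (measurable_X k _).aestronglyMeasurable]
  refine integral_congr_ae (Filter.Eventually.of_forall fun U => ?_)
  simp only [X_swap hab, Equiv.swap_apply_self]

lemma J2_swap (hμ : ∀ V : Matrix.unitaryGroup (Fin d) ℂ, μ.map (fun U => V * U) = μ)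
    {a b : Fin d} (hab : a ≠ b) (x y : Fin d) :
    J2 μ k (Equiv.swap a b x) (Equiv.swap a b y) = J2 μ k x y := by
  unfold J2
  rw [← integral_comp_mulL μ hμ (swapU a b hab)
    (fun U => X k (Equiv.swap a b x) U * X k (Equiv.swap a b y) U)
    ((measurable_X k _).mul (measurable_X k _)).aestronglyMeasurable]
  refine integral_congr_ae (Filter.Eventually.of_forall fun U => ?_)
  simp only [X_swap hab, Equiv.swap_apply_self]

lemma J3_swap (hμ : ∀ V : Matrix.unitaryGroup (Fin d) ℂ, μ.map (fun U => V * U) = μ)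
    {a b : Fin d} (hab : a ≠ b) (x y z : Fin d) :
    J3 μ k (Equiv.swap a b x) (Equiv.swap a b y) (Equiv.swap a b z) = J3 μ k x y z := by
  unfold J3
  rw [← integral_comp_mulL μ hμ (swapU a b hab)
    (fun U => X k (Equiv.swap a b x) U * X k (Equiv.swap a b y) U * X k (Equiv.swap a b z) U)
    (((measurable_X k _).mul (measurable_X k _)).mul (measurable_X k _)).aestronglyMeasurable]
  refine integral_congr_ae (Filter.Eventually.of_forall fun U => ?_)
  simp only [X_swap hab, Equiv.swap_apply_self]

lemma J2_diag (hμ : ∀ V : Matrix.unitaryGroup (Fin d) ℂ, μ.map (fun U => V * U) = μ)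
    {a b : Fin d} (hab : a ≠ b) : J2 μ k a a = 2 * J2 μ k a b := by
  have hH := integral_comp_mulL μ hμ (hU a b hab) (fun U => X k a U * X k b U)
    ((measurable_X k a).mul (measurable_X k b)).aestronglyMeasurable
  have hG := integral_comp_mulL μ hμ (gU a b hab) (fun U => X k a U * X k b U)
    ((measurable_X k a).mul (measurable_X k b)).aestronglyMeasurable
  have hadd : ∫ U, (X k a (hU a b hab * U) * X k b (hU a b hab * U)
      + X k a (gU a b hab * U) * X k b (gU a b hab * U)) ∂μ
      = J2 μ k a b + J2 μ k a b := by
    rw [integral_add (int2comp μ k _ a b) (int2comp μ k _ a b), hH, hG]; rfl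
  have hpt : ∀ U, X k a (hU a b hab * U) * X k b (hU a b hab * U)
      + X k a (gU a b hab * U) * X k b (gU a b hab * U)
      = X k a U * X k a U * (1 / 2) + X k b U * X k b U * (1 / 2) := fun U => by
    linear_combination pt4 hab k U
  rw [integral_congr_ae (Filter.Eventually.of_forall hpt)] at hadd
  rw [integral_add ((int2 μ k a a).mul_const _) ((int2 μ k b b).mul_const _),
    integral_mul_const, integral_mul_const] at hadd
  have hbb : J2 μ k b b = J2 μ k a a := by
    have := J2_swap μ k hμ hab a a
    simpa using this
  have h2 : J2 μ k a a * (1 / 2) + J2 μ k b b * (1 / 2) = J2 μ k a b + J2 μ k a b := hadd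
  linarith [h2, hbb]

lemma J3_diag (hμ : ∀ V : Matrix.unitaryGroup (Fin d) ℂ, μ.map (fun U => V * U) = μ)
    {a b : Fin d} (hab : a ≠ b) : J3 μ k a a a = 3 * J3 μ k a a b := by
  have hF : AEStronglyMeasurable (fun U => X k a U * X k b U * (X k a U + X k b U)) μ :=
    (((measurable_X k a).mul (measurable_X k b)).mul
      ((measurable_X k a).add (measurable_X k b))).aestronglyMeasurable
  have hH := integral_comp_mulL μ hμ (hU a b hab)
    (fun U => X k a U * X k b U * (X k a U + X k b U)) hF
  have hG := integral_comp_mulL μ hμ (gU a b hab)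
    (fun U => X k a U * X k b U * (X k a U + X k b U)) hF
  have hadd : ∫ U, (X k a (hU a b hab * U) * X k b (hU a b hab * U)
        * (X k a (hU a b hab * U) + X k b (hU a b hab * U))
      + X k a (gU a b hab * U) * X k b (gU a b hab * U)
        * (X k a (gU a b hab * U) + X k b (gU a b hab * U))) ∂μ
      = 2 * ∫ U, X k a U * X k b U * (X k a U + X k b U) ∂μ := by
    rw [integral_add (int3comp μ k _ a b) (int3comp μ k _ a b), hH, hG]; ring
  have hpt : ∀ U, X k a (hU a b hab * U) * X k b (hU a b hab * U)
        * (X k a (hU a b hab * U) + X k b (hU a b hab * U))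
      + X k a (gU a b hab * U) * X k b (gU a b hab * U)
        * (X k a (gU a b hab * U) + X k b (gU a b hab * U))
      = X k a U * X k a U * X k a U * (1 / 2) + X k b U * X k b U * X k b U * (1 / 2)
        + X k a U * X k a U * X k b U * (1 / 2) + X k a U * X k b U * X k b U * (1 / 2) :=
    fun U => by linear_combination pt6 hab k U
  rw [integral_congr_ae (Filter.Eventually.of_forall hpt)] at hadd
  have IA : Integrable (fun U => X k a U * X k a U * X k a U * (1 / 2)) μ :=
    (int3 μ k a a a).mul_const _
  have IB : Integrable (fun U => X k b U * X k b U * X k b U * (1 / 2)) μ :=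
    (int3 μ k b b b).mul_const _
  have IC : Integrable (fun U => X k a U * X k a U * X k b U * (1 / 2)) μ :=
    (int3 μ k a a b).mul_const _
  have ID : Integrable (fun U => X k a U * X k b U * X k b U * (1 / 2)) μ :=
    (int3 μ k a b b).mul_const _
  have IAB : Integrable (fun U => X k a U * X k a U * X k a U * (1 / 2)
      + X k b U * X k b U * X k b U * (1 / 2)) μ := IA.add IB
  have IABC : Integrable (fun U => X k a U * X k a U * X k a U * (1 / 2)
      + X k b U * X k b U * X k b U * (1 / 2)
      + X k a U * X k a U * X k b U * (1 / 2)) μ := IAB.add IC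
  rw [integral_add IABC ID, integral_add IAB IC, integral_add IA IB] at hadd
  rw [integral_mul_const, integral_mul_const, integral_mul_const, integral_mul_const] at hadd
  have hrhs : ∫ U, X k a U * X k b U * (X k a U + X k b U) ∂μ
      = J3 μ k a a b + J3 μ k a b b := by
    rw [show (fun U => X k a U * X k b U * (X k a U + X k b U))
      = fun U => (X k a U * X k a U * X k b U) + (X k a U * X k b U * X k b U) from
      funext fun U => by ring]
    rw [integral_add (int3 μ k a a b) (int3 μ k a b b)]; rfl
  have hbbb : J3 μ k b b b = J3 μ k a a a := by
    have := J3_swap μ k hμ hab a a a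
    simpa using this
  have habb : J3 μ k a b b = J3 μ k a a b := by
    have h1 := J3_swap μ k hμ hab a b b
    simp only [Equiv.swap_apply_left, Equiv.swap_apply_right] at h1
    have h2 : J3 μ k b a a = J3 μ k a a b := by
      unfold J3
      exact integral_congr_ae (Filter.Eventually.of_forall fun U => by ring)
    linarith [h1, h2]
  rw [hrhs] at hadd
  have : J3 μ k a a a * (1/2) + J3 μ k b b b * (1/2) + J3 μ k a a b * (1/2)
      + J3 μ k a b b * (1/2) = 2 * (J3 μ k a a b + J3 μ k a b b) := hadd
  linarith [this, hbbb, habb]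

lemma sumJ1 : ∑ a, J1 μ k a = 1 := by
  unfold J1
  rw [← integral_finset_sum _ (fun a _ => int1 μ k a)]
  simp only [sum_X]
  simp

lemma J1_val (hμ : ∀ V : Matrix.unitaryGroup (Fin d) ℂ, μ.map (fun U => V * U) = μ)
    (a : Fin d) : J1 μ k a = 1 / d := by
  have hd : 0 < d := a.pos
  have he : ∀ x, J1 μ k x = J1 μ k a := fun x => by
    rcases eq_or_ne x a with rfl | h
    · rfl
    · have := J1_swap μ k hμ h a
      rwa [Equiv.swap_apply_right] at this
  have hs := sumJ1 μ k
  rw [Finset.sum_congr rfl (fun x _ => he x), Finset.sum_const, Finset.card_univ,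
    Fintype.card_fin, nsmul_eq_mul] at hs
  have hd0 : (d : ℝ) ≠ 0 := Nat.cast_ne_zero.2 hd.ne'
  rw [eq_div_iff hd0]
  linarith [hs]

lemma J2_val (hμ : ∀ V : Matrix.unitaryGroup (Fin d) ℂ, μ.map (fun U => V * U) = μ)
    {i j : Fin d} (hij : i ≠ j) : J2 μ k i j = 1 / (d * (d + 1)) := by
  have hd : 0 < d := i.pos
  have hd0 : (d : ℝ) ≠ 0 := Nat.cast_ne_zero.2 hd.ne'
  have hsum : ∑ l, J2 μ k i l = 1 / d := by
    unfold J2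
    rw [← integral_finset_sum _ (fun l _ => int2 μ k i l)]
    have hpt : ∀ U : Matrix.unitaryGroup (Fin d) ℂ,
        ∑ l, X k i U * X k l U = X k i U := fun U => by
      rw [← Finset.mul_sum, sum_X, mul_one]
    rw [integral_congr_ae (Filter.Eventually.of_forall hpt)]
    exact J1_val μ k hμ i
  have hterm : ∀ l, J2 μ k i l = J2 μ k i j + (if l = i then J2 μ k i j else 0) := by
    intro l
    rcases eq_or_ne l i with rfl | hli
    · rw [if_pos rfl, J2_diag μ k hμ hij]; ring
    · rw [if_neg hli, add_zero]
      rcases eq_or_ne l j with rfl | hlj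
      · rfl
      · have := J2_swap μ k hμ hlj i l
        rw [Equiv.swap_apply_left,
          Equiv.swap_apply_of_ne_of_ne (Ne.symm hli) hij] at this
        exact this.symm
  rw [Finset.sum_congr rfl (fun l _ => hterm l), Finset.sum_add_distrib, Finset.sum_const,
    Finset.sum_ite_eq', Finset.card_univ, Fintype.card_fin, nsmul_eq_mul,
    if_pos (Finset.mem_univ i)] at hsum
  have hd1 : (d : ℝ) + 1 ≠ 0 := by positivity
  rw [eq_div_iff (mul_ne_zero hd0 hd1)]
  field_simp at hsum
  linarith [hsum]

lemma J3iij_val (hμ : ∀ V : Matrix.unitaryGroup (Fin d) ℂ, μ.map (fun U => V * U) = μ)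
    {i j : Fin d} (hij : i ≠ j) : J3 μ k i i j = 2 / (d * (d + 1) * (d + 2)) := by
  have hd : 0 < d := i.pos
  have hd0 : (d : ℝ) ≠ 0 := Nat.cast_ne_zero.2 hd.ne'
  have hd1 : (d : ℝ) + 1 ≠ 0 := by positivity
  have hd2 : (d : ℝ) + 2 ≠ 0 := by positivity
  have hsum : ∑ l, J3 μ k i i l = 2 / (d * (d + 1)) := by
    unfold J3
    rw [← integral_finset_sum _ (fun l _ => int3 μ k i i l)]
    have hpt : ∀ U : Matrix.unitaryGroup (Fin d) ℂ,
        ∑ l, X k i U * X k i U * X k l U = X k i U * X k i U := fun U => by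
      rw [← Finset.mul_sum, sum_X, mul_one]
    rw [integral_congr_ae (Filter.Eventually.of_forall hpt)]
    have h1 : (∫ U, X k i U * X k i U ∂μ) = J2 μ k i i := rfl
    rw [h1, J2_diag μ k hμ hij, J2_val μ k hμ hij]
    ring
  have hterm : ∀ l, J3 μ k i i l
      = J3 μ k i i j + (if l = i then 2 * J3 μ k i i j else 0) := by
    intro l
    rcases eq_or_ne l i with rfl | hli
    · rw [if_pos rfl, J3_diag μ k hμ hij]; ring
    · rw [if_neg hli, add_zero]
      rcases eq_or_ne l j with rfl | hlj
      · rfl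
      · have := J3_swap μ k hμ hlj i i l
        rw [Equiv.swap_apply_left,
          Equiv.swap_apply_of_ne_of_ne (Ne.symm hli) hij] at this
        exact this.symm
  rw [Finset.sum_congr rfl (fun l _ => hterm l), Finset.sum_add_distrib, Finset.sum_const,
    Finset.sum_ite_eq', Finset.card_univ, Fintype.card_fin, nsmul_eq_mul,
    if_pos (Finset.mem_univ i)] at hsum
  rw [eq_div_iff (mul_ne_zero (mul_ne_zero hd0 hd1) hd2)]
  field_simp at hsum
  linarith [hsum]

lemma J3jij_eq (hμ : ∀ V : Matrix.unitaryGroup (Fin d) ℂ, μ.map (fun U => V * U) = μ)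
    {i j : Fin d} (hij : i ≠ j) : J3 μ k j i j = J3 μ k i i j := by
  have h1 : J3 μ k j i j = J3 μ k i j j := by
    unfold J3
    exact integral_congr_ae (Filter.Eventually.of_forall fun U => by ring)
  have h2 := J3_swap μ k hμ hij i j j
  simp only [Equiv.swap_apply_left, Equiv.swap_apply_right] at h2
  -- h2 : J3 j i i = J3 i j j
  have h3 : J3 μ k j i i = J3 μ k i i j := by
    unfold J3
    exact integral_congr_ae (Filter.Eventually.of_forall fun U => by ring)
  rw [h1, ← h2, h3]

lemma J3lij_val (hμ : ∀ V : Matrix.unitaryGroup (Fin d) ℂ, μ.map (fun U => V * U) = μ)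
    {i j l : Fin d} (hij : i ≠ j) (hli : l ≠ i) (hlj : l ≠ j) :
    J3 μ k l i j = 1 / (d * (d + 1) * (d + 2)) := by
  have hd : 0 < d := i.pos
  have hd3 : 3 ≤ d := by
    have hcard : ({l, i, j} : Finset (Fin d)).card = 3 := by
      rw [Finset.card_insert_of_notMem (by simp [hli, hlj]),
        Finset.card_insert_of_notMem (by simp [hij]), Finset.card_singleton]
    calc 3 = ({l, i, j} : Finset (Fin d)).card := hcard.symm
      _ ≤ Fintype.card (Fin d) := Finset.card_le_univ _
      _ = d := Fintype.card_fin d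
  have hd0 : (d : ℝ) ≠ 0 := Nat.cast_ne_zero.2 hd.ne'
  have hd1 : (d : ℝ) + 1 ≠ 0 := by positivity
  have hd2 : (d : ℝ) + 2 ≠ 0 := by positivity
  have hdm2 : (d : ℝ) - 2 ≠ 0 := by
    have : (3 : ℝ) ≤ (d : ℝ) := by exact_mod_cast hd3
    linarith
  have hsum : ∑ m, J3 μ k m i j = 1 / (d * (d + 1)) := by
    unfold J3
    rw [← integral_finset_sum _ (fun m _ => int3 μ k m i j)]
    have hpt : ∀ U : Matrix.unitaryGroup (Fin d) ℂ,
        ∑ m, X k m U * X k i U * X k j U = X k i U * X k j U := fun U => by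
      have : ∀ m, X k m U * X k i U * X k j U = X k i U * X k j U * X k m U := fun m => by ring
      rw [Finset.sum_congr rfl (fun m _ => this m), ← Finset.mul_sum, sum_X, mul_one]
    rw [integral_congr_ae (Filter.Eventually.of_forall hpt)]
    exact J2_val μ k hμ hij
  have hterm : ∀ m, J3 μ k m i j
      = J3 μ k l i j + (if m = i then J3 μ k i i j - J3 μ k l i j else 0)
        + (if m = j then J3 μ k i i j - J3 μ k l i j else 0) := by
    intro m
    rcases eq_or_ne m i with rfl | hmi
    · rw [if_pos rfl, if_neg hij]; ring
    · rcases eq_or_ne m j with rfl | hmj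
      · rw [if_neg hmi, if_pos rfl, J3jij_eq μ k hμ hij]; ring
      · rw [if_neg hmi, if_neg hmj, add_zero, add_zero]
        rcases eq_or_ne m l with rfl | hml
        · rfl
        · have h4 := J3_swap μ k hμ hml m i j
          rw [Equiv.swap_apply_left,
            Equiv.swap_apply_of_ne_of_ne (Ne.symm hmi) (Ne.symm hli),
            Equiv.swap_apply_of_ne_of_ne (Ne.symm hmj) (Ne.symm hlj)] at h4
          exact h4.symm
  rw [Finset.sum_congr rfl (fun m _ => hterm m), Finset.sum_add_distrib,
    Finset.sum_add_distrib, Finset.sum_const, Finset.sum_ite_eq', Finset.sum_ite_eq',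
    Finset.card_univ, Fintype.card_fin, nsmul_eq_mul, if_pos (Finset.mem_univ i),
    if_pos (Finset.mem_univ j)] at hsum
  rw [J3iij_val μ k hμ hij] at hsum
  set c := J3 μ k l i j with hc
  set T := 1 / ((d : ℝ) * ((d : ℝ) + 1) * ((d : ℝ) + 2)) with hT
  have e1 : (2 : ℝ) / ((d : ℝ) * ((d : ℝ) + 1) * ((d : ℝ) + 2)) = 2 * T := by rw [hT]; ring
  have e2 : (1 : ℝ) / ((d : ℝ) * ((d : ℝ) + 1)) = ((d : ℝ) + 2) * T := by
    rw [hT]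
    field_simp
  rw [e1, e2] at hsum
  have key : ((d : ℝ) - 2) * c = ((d : ℝ) - 2) * T := by
    ring_nf
    ring_nf at hsum
    linarith [hsum]
  exact mul_left_cancel₀ hdm2 key

end Moments

lemma entry_std {d : ℕ} (l k : Fin d) (Uv : Matrix (Fin d) (Fin d) ℂ) :
    ((star Uv * Matrix.single l l 1 * Uv : Matrix (Fin d) (Fin d) ℂ)) k k
      = starRingEnd ℂ (Uv l k) * Uv l k := by
  simp [Matrix.mul_apply, Matrix.star_apply, Matrix.single_apply, ite_and, mul_ite, ite_mul,
    mul_zero, zero_mul, mul_one, Finset.sum_ite_eq, Finset.sum_ite_eq']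

lemma rho_entry {d : ℕ} (r : ℕ) (k : Fin d) (U : Matrix.unitaryGroup (Fin d) ℂ) :
    ((star (U : Matrix (Fin d) (Fin d) ℂ) * rhoR d r * (U : Matrix (Fin d) (Fin d) ℂ)) k k).re
      = (r : ℝ)⁻¹ * ∑ l : Fin d, (if (l : ℕ) < r then X k l U else 0) := by
  set Uv := (U : Matrix (Fin d) (Fin d) ℂ) with hUv
  have h1 : star Uv * rhoR d r * Uv
      = (r : ℂ)⁻¹ • ∑ l : Fin d,
          (if (l : ℕ) < r then star Uv * Matrix.single l l 1 * Uv else 0) := by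
    unfold rhoR
    rw [Matrix.mul_smul, Matrix.smul_mul]
    congr 1
    rw [Matrix.mul_sum, Matrix.sum_mul]
    refine Finset.sum_congr rfl fun l _ => ?_
    by_cases h : (l : ℕ) < r
    · rw [if_pos h, if_pos h]
    · rw [if_neg h, if_neg h, mul_zero, zero_mul]
  rw [h1, Matrix.smul_apply, Matrix.sum_apply]
  have h2 : ∀ l : Fin d,
      ((if (l : ℕ) < r then star Uv * Matrix.single l l 1 * Uv else 0 :
          Matrix (Fin d) (Fin d) ℂ)) k k
      = ((if (l : ℕ) < r then Complex.normSq (Uv l k) else 0 : ℝ) : ℂ) := by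
    intro l
    by_cases h : (l : ℕ) < r
    · rw [if_pos h, if_pos h, entry_std, ← Complex.normSq_eq_conj_mul_self]
    · rw [if_neg h, if_neg h]
      simp
  rw [Finset.sum_congr rfl (fun l _ => h2 l), ← Complex.ofReal_sum]
  have h3 : ((r : ℂ)⁻¹) = (((r : ℝ)⁻¹ : ℝ) : ℂ) := by push_cast; ring
  rw [h3, smul_eq_mul, ← Complex.ofReal_mul, Complex.ofReal_re]
  congr 1
  refine Finset.sum_congr rfl fun l _ => ?_
  by_cases h : (l : ℕ) < r
  · rw [if_pos h, if_pos h]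
    unfold X
    rw [← Complex.sq_norm]
  · rw [if_neg h, if_neg h]

end CovAux

/-- Second moment of an off-diagonal entry of the `A` block of the
covariant-measurement LS estimator for `ρ_r`:
`d(d+1)²·∫ ⟨e_k, U*ρ_r U e_k⟩·|U_{ik}|²|U_{jk}|² dU = ((r+2)/r)·((d+1)/(d+2))`
for `1 ≤ i, j ≤ r`, `i ≠ j`. -/
theorem covariant_ls_A_offdiagonal_moment
    (d r : ℕ) (hd : 2 ≤ d) (hr : 2 ≤ r) (hrd : r ≤ d)
    (μ : Measure (Matrix.unitaryGroup (Fin d) ℂ)) [IsProbabilityMeasure μ]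
    (hμ : ∀ V : Matrix.unitaryGroup (Fin d) ℂ, μ.map (fun U => V * U) = μ)
    (k i j : Fin d) (hij : i ≠ j) (hi : (i : ℕ) < r) (hj : (j : ℕ) < r) :
    (d : ℝ) * ((d : ℝ) + 1) ^ 2 *
      ∫ U, ((star (U : Matrix (Fin d) (Fin d) ℂ) * rhoR d r * (U : Matrix (Fin d) (Fin d) ℂ)) k k).re *
        (‖(U : Matrix (Fin d) (Fin d) ℂ) i k‖ ^ 2 * ‖(U : Matrix (Fin d) (Fin d) ℂ) j k‖ ^ 2) ∂μ
      = (((r : ℝ) + 2) / (r : ℝ)) * (((d : ℝ) + 1) / ((d : ℝ) + 2)) := by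
  classical
  have hd0 : (d : ℝ) ≠ 0 := Nat.cast_ne_zero.2 (by omega)
  have hd1 : (d : ℝ) + 1 ≠ 0 := by positivity
  have hd2 : (d : ℝ) + 2 ≠ 0 := by positivity
  have hr0 : (r : ℝ) ≠ 0 := Nat.cast_ne_zero.2 (by omega)
  set T : ℝ := 1 / ((d : ℝ) * ((d : ℝ) + 1) * ((d : ℝ) + 2)) with hT
  have hpt : ∀ U : Matrix.unitaryGroup (Fin d) ℂ,
      ((star (U : Matrix (Fin d) (Fin d) ℂ) * rhoR d r * (U : Matrix (Fin d) (Fin d) ℂ)) k k).re *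
        (‖(U : Matrix (Fin d) (Fin d) ℂ) i k‖ ^ 2 * ‖(U : Matrix (Fin d) (Fin d) ℂ) j k‖ ^ 2)
      = (r : ℝ)⁻¹ * ∑ l : Fin d,
          (if (l : ℕ) < r then CovAux.X k l U * (CovAux.X k i U * CovAux.X k j U) else 0) := by
    intro U
    rw [CovAux.rho_entry r k U, mul_assoc]
    congr 1
    rw [Finset.sum_mul]
    refine Finset.sum_congr rfl fun l _ => ?_
    by_cases h : (l : ℕ) < r
    · rw [if_pos h, if_pos h]; rfl
    · rw [if_neg h, if_neg h, zero_mul]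
  rw [integral_congr_ae (Filter.Eventually.of_forall hpt)]
  have hintl : ∀ l : Fin d, Integrable
      (fun U => if (l : ℕ) < r then CovAux.X k l U * (CovAux.X k i U * CovAux.X k j U) else 0)
      μ := by
    intro l
    by_cases h : (l : ℕ) < r
    · simp only [if_pos h]
      exact (CovAux.int3 μ k l i j).congr
        (Filter.Eventually.of_forall fun U => by ring)
    · simp only [if_neg h]
      exact integrable_const 0
  rw [MeasureTheory.integral_const_mul, integral_finset_sum _ (fun l _ => hintl l)]
  have hterml : ∀ l : Fin d,
      (∫ U, (if (l : ℕ) < r then CovAux.X k l U * (CovAux.X k i U * CovAux.X k j U) else 0) ∂μ)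
      = (if (l : ℕ) < r then CovAux.J3 μ k l i j else 0) := by
    intro l
    by_cases h : (l : ℕ) < r
    · simp only [if_pos h]
      unfold CovAux.J3
      exact integral_congr_ae (Filter.Eventually.of_forall fun U => by ring)
    · simp only [if_neg h]
      exact integral_zero _ _
  rw [Finset.sum_congr rfl (fun l _ => hterml l)]
  have hterm : ∀ l : Fin d, (if (l : ℕ) < r then CovAux.J3 μ k l i j else 0)
      = (if (l : ℕ) < r then T else 0) + (if l = i then T else 0) + (if l = j then T else 0) := by
    intro l
    rcases eq_or_ne l i with rfl | hli
    · rw [if_pos hi, if_pos hi, if_pos rfl, if_neg hij, CovAux.J3iij_val μ k hμ hij, hT]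
      field_simp
      norm_num
    · rcases eq_or_ne l j with rfl | hlj
      · rw [if_pos hj, if_pos hj, if_neg hli, if_pos rfl, CovAux.J3jij_eq μ k hμ hij,
          CovAux.J3iij_val μ k hμ hij, hT]
        field_simp
        ring
      · by_cases h : (l : ℕ) < r
        · rw [if_pos h, if_pos h, if_neg hli, if_neg hlj,
            CovAux.J3lij_val μ k hμ hij hli hlj, hT]
          ring
        · rw [if_neg h, if_neg h, if_neg hli, if_neg hlj]
          ring
  rw [Finset.sum_congr rfl (fun l _ => hterm l), Finset.sum_add_distrib, Finset.sum_add_distrib,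
    Finset.sum_ite_eq', Finset.sum_ite_eq', if_pos (Finset.mem_univ i),
    if_pos (Finset.mem_univ j)]
  have hcount : ∑ l : Fin d, (if (l : ℕ) < r then T else 0) = (r : ℝ) * T := by
    rw [Fin.sum_univ_eq_sum_range (fun n => if n < r then T else 0) d, ← Finset.sum_filter]
    have hfil : (Finset.range d).filter (fun n => n < r) = Finset.range r := by
      ext n
      simp only [Finset.mem_filter, Finset.mem_range]
      omega
    rw [hfil, Finset.sum_const, Finset.card_range, nsmul_eq_mul]
  rw [hcount, hT]
  field_simp
  ring
end

section
/- Let d ≥ 2 and 1 ≤ r < d, and let ρ_r = (1/r) Σ_{l=1}^r E_{ll}. Then for any k ∈ {1,…,d} and any indices i, j with 1 ≤ i ≤ r < j ≤ d, the single-sample second moment of an entry of the off-diagonal B block of the covariant-measurement least squares estimator equals d(d+1)² · ∫_{U(d)} ⟨e_k, U*ρ_r U e_k⟩ · |U_{ik}|² |U_{jk}|² dU = ((r+1)/r) · ((d+1)/(d+2)). -/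
open MeasureTheory ProbabilityTheory Matrix
open scoped ComplexOrder

namespace CovLS

variable {d : ℕ}

abbrev UG (d : ℕ) := Matrix.unitaryGroup (Fin d) ℂ

/-- squared modulus of the `(a,k)` entry -/
noncomputable def X (k a : Fin d) (U : UG d) : ℝ :=
  ‖(U : Matrix (Fin d) (Fin d) ℂ) a k‖ ^ 2

lemma measurable_entry (a b : Fin d) :
    Measurable (fun U : UG d => (U : Matrix (Fin d) (Fin d) ℂ) a b) := by
  have h1 : Measurable (fun U : UG d => (U : Matrix (Fin d) (Fin d) ℂ)) :=
    measurable_subtype_coe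
  have h2 : Measurable (fun U : UG d => (U : Matrix (Fin d) (Fin d) ℂ) a) :=
    (measurable_pi_apply a).comp h1
  exact (measurable_pi_apply b).comp h2

lemma measurable_X (k a : Fin d) : Measurable (X k a) :=
  (((measurable_entry a k).norm).pow_const 2)

lemma X_nonneg (k a : Fin d) (U : UG d) : 0 ≤ X k a U := by unfold X; positivity

lemma sum_X (k : Fin d) (U : UG d) : ∑ m, X k m U = 1 := by
  have hU : star (U : Matrix (Fin d) (Fin d) ℂ) * U = 1 :=
    Matrix.mem_unitaryGroup_iff'.mp U.2
  have h := congrArg (fun M : Matrix (Fin d) (Fin d) ℂ => (M k k).re) hU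
  simp only [Matrix.mul_apply, Matrix.star_apply, Matrix.one_apply_eq, Complex.one_re] at h
  rw [← h, Complex.re_sum]
  refine Finset.sum_congr rfl fun m _ => ?_
  have hcm : (star ((U : Matrix (Fin d) (Fin d) ℂ) m k) * (U : Matrix (Fin d) (Fin d) ℂ) m k)
      = ((‖(U : Matrix (Fin d) (Fin d) ℂ) m k‖ ^ 2 : ℝ) : ℂ) := by
    exact_mod_cast Complex.conj_mul' ((U : Matrix (Fin d) (Fin d) ℂ) m k)
  rw [hcm]
  simp [X, ← Complex.ofReal_pow]

lemma X_le_one (k a : Fin d) (U : UG d) : X k a U ≤ 1 := by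
  have h := sum_X k U
  have : X k a U ≤ ∑ m, X k m U :=
    Finset.single_le_sum (fun m _ => X_nonneg k m U) (Finset.mem_univ a)
  linarith

lemma entry_norm_le_one (k a : Fin d) (U : UG d) :
    ‖(U : Matrix (Fin d) (Fin d) ℂ) a k‖ ≤ 1 := by
  have h := X_le_one k a U
  simp only [X] at h
  nlinarith [norm_nonneg ((U : Matrix (Fin d) (Fin d) ℂ) a k), h]

section Measure
variable (μ : Measure (UG d)) [IsProbabilityMeasure μ]

lemma integrable_of_bound {f : UG d → ℝ} (hf : Measurable f) (C : ℝ)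
    (hb : ∀ U, |f U| ≤ C) : Integrable f μ := by
  refine (integrable_const C).mono' hf.aestronglyMeasurable (ae_of_all _ fun U => ?_)
  simpa [Real.norm_eq_abs] using hb U

lemma meas_mulLeft (V : UG d) : Measurable (fun U : UG d => V * U) := by
  have h : Measurable (fun U : UG d =>
      (V : Matrix (Fin d) (Fin d) ℂ) * (U : Matrix (Fin d) (Fin d) ℂ)) := by
    apply measurable_pi_lambda; intro a; apply measurable_pi_lambda; intro b
    simp only [Matrix.mul_apply]
    exact Finset.measurable_sum _ fun m _ => (measurable_entry m b).const_mul _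
  exact Measurable.subtype_mk h

lemma integral_mulLeft (hμ : ∀ V : UG d, μ.map (fun U => V * U) = μ)
    (V : UG d) {f : UG d → ℝ} (hf : Measurable f) :
    ∫ U, f (V * U) ∂μ = ∫ U, f U ∂μ := by
  have h := MeasureTheory.integral_map (μ := μ) (φ := fun U : UG d => V * U) (f := f)
    (meas_mulLeft V).aemeasurable hf.aestronglyMeasurable
  rw [hμ V] at h
  exact h.symm

lemma integral_zero_of_flip (hμ : ∀ V : UG d, μ.map (fun U => V * U) = μ)
    (V : UG d) {f : UG d → ℝ} (hf : Measurable f)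
    (hflip : ∀ U, f (V * U) = - f U) : ∫ U, f U ∂μ = 0 := by
  have h := integral_mulLeft μ hμ V hf
  have h2 : ∫ U, f (V * U) ∂μ = ∫ U, - f U ∂μ := by
    exact integral_congr_ae (ae_of_all _ fun U => hflip U)
  rw [h2, integral_neg] at h
  linarith

end Measure

/-! ### special unitaries -/

/-- permutation unitary -/
noncomputable def permU (σ : Equiv.Perm (Fin d)) : UG d :=
  ⟨σ.permMatrix ℂ, by
    rw [Matrix.mem_unitaryGroup_iff']
    have hstar : star (σ.permMatrix ℂ) = (σ⁻¹).permMatrix ℂ := by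
      rw [Matrix.star_eq_conjTranspose, Matrix.conjTranspose_permMatrix]
    rw [hstar, ← Matrix.permMatrix_mul, mul_inv_cancel, Matrix.permMatrix_one]⟩

lemma permU_entry (σ : Equiv.Perm (Fin d)) (U : UG d) (m n : Fin d) :
    ((permU σ * U : UG d) : Matrix (Fin d) (Fin d) ℂ) m n
      = (U : Matrix (Fin d) (Fin d) ℂ) (σ m) n := by
  show ((σ.permMatrix ℂ) * (U : Matrix (Fin d) (Fin d) ℂ)) m n = _
  rw [PEquiv.toMatrix_toPEquiv_mul]
  rfl

lemma X_permU (k : Fin d) (σ : Equiv.Perm (Fin d)) (U : UG d) (a : Fin d) :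
    X k a (permU σ * U) = X k (σ a) U := by
  simp [X, permU_entry]

/-- diagonal unitary -/
noncomputable def diagU (g : Fin d → ℂ) (hg : ∀ m, star (g m) * g m = 1) : UG d :=
  ⟨Matrix.diagonal g, by
    rw [Matrix.mem_unitaryGroup_iff', Matrix.star_eq_conjTranspose,
      Matrix.diagonal_conjTranspose, Matrix.diagonal_mul_diagonal]
    ext i j
    by_cases h : i = j
    · subst h; rw [Matrix.diagonal_apply_eq, Matrix.one_apply_eq]; exact hg i
    · simp [Matrix.diagonal_apply_ne _ h, Matrix.one_apply_ne h]⟩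

lemma diagU_entry (g : Fin d → ℂ) (hg : ∀ m, star (g m) * g m = 1) (U : UG d) (m n : Fin d) :
    ((diagU g hg * U : UG d) : Matrix (Fin d) (Fin d) ℂ) m n
      = g m * (U : Matrix (Fin d) (Fin d) ℂ) m n := by
  show ((Matrix.diagonal g) * (U : Matrix (Fin d) (Fin d) ℂ)) m n = _
  rw [Matrix.diagonal_mul]

lemma X_diagU (k : Fin d) (g : Fin d → ℂ) (hg : ∀ m, star (g m) * g m = 1)
    (hn : ∀ m, ‖g m‖ = 1) (U : UG d) (a : Fin d) :
    X k a (diagU g hg * U) = X k a U := by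
  simp [X, diagU_entry, norm_mul, hn, mul_pow, one_pow]


/-! ### Hadamard-type rotation unitary -/

noncomputable def sC : ℂ := ((Real.sqrt 2)⁻¹ : ℝ)

lemma sC_mul_sC : sC * sC = (1/2 : ℂ) := by
  rw [sC, ← Complex.ofReal_mul, ← mul_inv, Real.mul_self_sqrt (by norm_num : (0:ℝ) ≤ 2)]
  norm_num

lemma sC_star : star sC = sC := by
  simp [sC, Complex.star_def, Complex.conj_ofReal]

lemma norm_sC_sq : ‖sC‖ ^ 2 = 1/2 := by
  rw [sC, Complex.norm_real, Real.norm_eq_abs,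
    abs_of_nonneg (by positivity), inv_pow, Real.sq_sqrt (by norm_num : (0:ℝ) ≤ 2)]
  norm_num

noncomputable def HadM (a b : Fin d) : Matrix (Fin d) (Fin d) ℂ := Matrix.of fun m n =>
  if m = a then (if n = a then sC else if n = b then sC else 0)
  else if m = b then (if n = a then sC else if n = b then -sC else 0)
  else (if m = n then 1 else 0)

lemma row_sum_two {α : Type*} [Fintype α] [DecidableEq α] (a b : α) (hab : a ≠ b)
    (f : α → ℂ) (c1 c2 : ℂ) :
    ∑ p, (if p = a then c1 else if p = b then c2 else 0) * f p = c1 * f a + c2 * f b := by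
  have h : ∀ p, (if p = a then c1 else if p = b then c2 else 0) * f p
      = (if p = a then c1 * f p else 0) + (if p = b then c2 * f p else 0) := by
    intro p
    by_cases h1 : p = a
    · subst h1; rw [if_pos rfl, if_pos rfl, if_neg hab, add_zero]
    · rw [if_neg h1, if_neg h1, zero_add]
      by_cases h2 : p = b
      · rw [if_pos h2, if_pos h2]
      · rw [if_neg h2, if_neg h2, zero_mul]
  simp only [h, Finset.sum_add_distrib, Finset.sum_ite_eq', Finset.mem_univ, if_true]

lemma HadM_mul_apply {a b : Fin d} (hab : a ≠ b) (M : Matrix (Fin d) (Fin d) ℂ) (m n : Fin d) :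
    (HadM a b * M) m n =
      if m = a then sC * M a n + sC * M b n
      else if m = b then sC * M a n - sC * M b n
      else M m n := by
  rw [Matrix.mul_apply]
  by_cases hma : m = a
  · subst hma
    rw [if_pos rfl]
    have h : ∀ p, HadM m b m p = (if p = m then sC else if p = b then sC else 0) := by
      intro p; simp [HadM]
    calc ∑ p, HadM m b m p * M p n
        = ∑ p, (if p = m then sC else if p = b then sC else 0) * M p n := by
          refine Finset.sum_congr rfl fun p _ => by rw [h p]
      _ = sC * M m n + sC * M b n := row_sum_two m b hab _ sC sC
  · by_cases hmb : m = b
    · subst hmb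
      rw [if_neg hma, if_pos rfl]
      have h : ∀ p, HadM a m m p = (if p = a then sC else if p = m then -sC else 0) := by
        intro p; simp [HadM, hma]
      calc ∑ p, HadM a m m p * M p n
          = ∑ p, (if p = a then sC else if p = m then -sC else 0) * M p n := by
            refine Finset.sum_congr rfl fun p _ => by rw [h p]
        _ = sC * M a n + (-sC) * M m n := row_sum_two a m (fun hc => hma hc.symm) _ sC (-sC)
        _ = sC * M a n - sC * M m n := by ring
    · rw [if_neg hma, if_neg hmb]
      have h : ∀ p, HadM a b m p = (if m = p then 1 else 0) := by
        intro p; simp [HadM, hma, hmb]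
      calc ∑ p, HadM a b m p * M p n
          = ∑ p, (if m = p then 1 else 0) * M p n := by
            refine Finset.sum_congr rfl fun p _ => by rw [h p]
        _ = M m n := by
            simp only [ite_mul, one_mul, zero_mul, Finset.sum_ite_eq, Finset.mem_univ, if_true]

lemma HadM_mul_self {a b : Fin d} (hab : a ≠ b) : HadM a b * HadM a b = 1 := by
  ext m n
  rw [HadM_mul_apply hab]
  simp only [HadM, Matrix.of_apply, Matrix.one_apply]
  split_ifs <;> (try subst_vars) <;>
    first
      | rfl
      | tauto
      | linear_combination (2:ℂ) * sC_mul_sC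
      | ring

lemma HadM_star {a b : Fin d} (hab : a ≠ b) : star (HadM a b) = HadM a b := by
  ext m n
  rw [Matrix.star_apply]
  simp only [HadM, Matrix.of_apply, apply_ite (star : ℂ → ℂ), star_one, star_zero,
    star_neg, sC_star]
  split_ifs <;> (try subst_vars) <;> first | rfl | tauto

noncomputable def HadU (a b : Fin d) (hab : a ≠ b) : UG d :=
  ⟨HadM a b, by
    rw [Matrix.mem_unitaryGroup_iff]
    show HadM a b * star (HadM a b) = 1
    rw [HadM_star hab, HadM_mul_self hab]⟩

lemma HadU_entry {a b : Fin d} (hab : a ≠ b) (U : UG d) (m n : Fin d) :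
    ((HadU a b hab * U : UG d) : Matrix (Fin d) (Fin d) ℂ) m n =
      if m = a then sC * (U : Matrix (Fin d) (Fin d) ℂ) a n + sC * (U : Matrix (Fin d) (Fin d) ℂ) b n
      else if m = b then sC * (U : Matrix (Fin d) (Fin d) ℂ) a n - sC * (U : Matrix (Fin d) (Fin d) ℂ) b n
      else (U : Matrix (Fin d) (Fin d) ℂ) m n := by
  show (HadM a b * (U : Matrix (Fin d) (Fin d) ℂ)) m n = _
  rw [HadM_mul_apply hab]


/-! ### cross terms -/

noncomputable def Cr (k a b : Fin d) (U : UG d) : ℝ :=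
  2 * ((U : Matrix (Fin d) (Fin d) ℂ) a k * (starRingEnd ℂ) ((U : Matrix (Fin d) (Fin d) ℂ) b k)).re

noncomputable def W (k a b : Fin d) (U : UG d) : ℝ :=
  (((U : Matrix (Fin d) (Fin d) ℂ) a k * (starRingEnd ℂ) ((U : Matrix (Fin d) (Fin d) ℂ) b k)) ^ 2).re

lemma measurable_Cr (k a b : Fin d) : Measurable (Cr k a b) := by
  apply Measurable.const_mul
  exact Complex.measurable_re.comp
    ((measurable_entry a k).mul (continuous_star.measurable.comp (measurable_entry b k)))

lemma measurable_W (k a b : Fin d) : Measurable (W k a b) := by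
  exact Complex.measurable_re.comp
    (((measurable_entry a k).mul (continuous_star.measurable.comp (measurable_entry b k))).pow_const 2)

lemma abs_Cr_le (k a b : Fin d) (U : UG d) : |Cr k a b U| ≤ 2 := by
  have h1 := entry_norm_le_one k a U
  have h2 := entry_norm_le_one k b U
  have h3 : |((U : Matrix (Fin d) (Fin d) ℂ) a k *
      (starRingEnd ℂ) ((U : Matrix (Fin d) (Fin d) ℂ) b k)).re|
      ≤ ‖(U : Matrix (Fin d) (Fin d) ℂ) a k‖ * ‖(U : Matrix (Fin d) (Fin d) ℂ) b k‖ := by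
    calc _ ≤ ‖(U : Matrix (Fin d) (Fin d) ℂ) a k *
        (starRingEnd ℂ) ((U : Matrix (Fin d) (Fin d) ℂ) b k)‖ := Complex.abs_re_le_norm _
      _ = _ := by
        simp [norm_mul]
  rw [Cr, abs_mul, abs_two]
  have hnn : (0:ℝ) ≤ ‖(U : Matrix (Fin d) (Fin d) ℂ) a k‖ := norm_nonneg _
  have hnn2 : (0:ℝ) ≤ ‖(U : Matrix (Fin d) (Fin d) ℂ) b k‖ := norm_nonneg _
  have h4 : ‖(U : Matrix (Fin d) (Fin d) ℂ) a k‖ * ‖(U : Matrix (Fin d) (Fin d) ℂ) b k‖ ≤ 1 :=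
    mul_le_one₀ h1 hnn2 h2
  have h5 : (0:ℝ) ≤ |((U : Matrix (Fin d) (Fin d) ℂ) a k *
      (starRingEnd ℂ) ((U : Matrix (Fin d) (Fin d) ℂ) b k)).re| := abs_nonneg _
  nlinarith

lemma abs_W_le (k a b : Fin d) (U : UG d) : |W k a b U| ≤ 1 := by
  have h1 := entry_norm_le_one k a U
  have h2 := entry_norm_le_one k b U
  have h3 : |W k a b U| ≤ (‖(U : Matrix (Fin d) (Fin d) ℂ) a k‖ *
      ‖(U : Matrix (Fin d) (Fin d) ℂ) b k‖) ^ 2 := by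
    calc |W k a b U| ≤ ‖((U : Matrix (Fin d) (Fin d) ℂ) a k *
        (starRingEnd ℂ) ((U : Matrix (Fin d) (Fin d) ℂ) b k)) ^ 2‖ := Complex.abs_re_le_norm _
      _ = _ := by
        simp [norm_pow, norm_mul]
  have hnn : (0:ℝ) ≤ ‖(U : Matrix (Fin d) (Fin d) ℂ) a k‖ := norm_nonneg _
  have hnn2 : (0:ℝ) ≤ ‖(U : Matrix (Fin d) (Fin d) ℂ) b k‖ := norm_nonneg _
  have h4 : ‖(U : Matrix (Fin d) (Fin d) ℂ) a k‖ * ‖(U : Matrix (Fin d) (Fin d) ℂ) b k‖ ≤ 1 :=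
    mul_le_one₀ h1 hnn2 h2
  nlinarith [mul_nonneg hnn hnn2]

/-- pointwise identity: `Cr² = 2·X_a·X_b + 2·W`. -/
lemma Cr_sq (k a b : Fin d) (U : UG d) :
    Cr k a b U ^ 2 = 2 * (X k a U * X k b U) + 2 * W k a b U := by
  set z := (U : Matrix (Fin d) (Fin d) ℂ) a k *
    (starRingEnd ℂ) ((U : Matrix (Fin d) (Fin d) ℂ) b k) with hz
  have hXX : X k a U * X k b U = z.re ^ 2 + z.im ^ 2 := by
    have : X k a U * X k b U = Complex.normSq z := by
      rw [hz, Complex.normSq_mul, Complex.normSq_conj]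
      simp [X, Complex.normSq_eq_norm_sq]
    rw [this, Complex.normSq_apply]; ring
  have hW : W k a b U = z.re ^ 2 - z.im ^ 2 := by
    rw [W, ← hz, sq, Complex.mul_re]; ring
  rw [Cr, ← hz, hXX, hW]; ring

/-- the three entry transformation laws under the Hadamard rotation -/
lemma X_HadU_left {k a b : Fin d} (hab : a ≠ b) (U : UG d) :
    X k a (HadU a b hab * U) = (X k a U + X k b U + Cr k a b U) / 2 := by
  set u := (U : Matrix (Fin d) (Fin d) ℂ) a k
  set v := (U : Matrix (Fin d) (Fin d) ℂ) b k
  have he : ((HadU a b hab * U : UG d) : Matrix (Fin d) (Fin d) ℂ) a k = sC * (u + v) := by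
    rw [HadU_entry hab U a k, if_pos rfl]; ring
  rw [X, he, norm_mul, mul_pow, norm_sC_sq]
  have hn : ‖u + v‖ ^ 2 = ‖u‖ ^ 2 + ‖v‖ ^ 2 + 2 * (u * (starRingEnd ℂ) v).re := by
    have := Complex.normSq_add u v
    simpa [Complex.normSq_eq_norm_sq] using this
  rw [hn, X, X, Cr]; ring

lemma X_HadU_right {k a b : Fin d} (hab : a ≠ b) (U : UG d) :
    X k b (HadU a b hab * U) = (X k a U + X k b U - Cr k a b U) / 2 := by
  set u := (U : Matrix (Fin d) (Fin d) ℂ) a k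
  set v := (U : Matrix (Fin d) (Fin d) ℂ) b k
  have he : ((HadU a b hab * U : UG d) : Matrix (Fin d) (Fin d) ℂ) b k = sC * (u - v) := by
    rw [HadU_entry hab U b k, if_neg (fun hc => hab hc.symm), if_pos rfl]; ring
  rw [X, he, norm_mul, mul_pow, norm_sC_sq]
  have hn : ‖u - v‖ ^ 2 = ‖u‖ ^ 2 + ‖v‖ ^ 2 - 2 * (u * (starRingEnd ℂ) v).re := by
    have := Complex.normSq_sub u v
    simpa [Complex.normSq_eq_norm_sq] using this
  rw [hn, X, X, Cr]; ring

lemma X_HadU_other {k a b m : Fin d} (hab : a ≠ b) (hma : m ≠ a) (hmb : m ≠ b) (U : UG d) :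
    X k m (HadU a b hab * U) = X k m U := by
  rw [X, HadU_entry hab U m k, if_neg hma, if_neg hmb]; rfl

/-! ### diagonal sign/phase unitaries -/

lemma sign_g_unit (b : Fin d) : ∀ m, star ((fun m => if m = b then (-1:ℂ) else 1) m) *
    (fun m => if m = b then (-1:ℂ) else 1) m = 1 := by
  intro m; by_cases h : m = b <;> simp [h]

lemma phase_g_unit (a : Fin d) : ∀ m, star ((fun m => if m = a then Complex.I else 1) m) *
    (fun m => if m = a then Complex.I else 1) m = 1 := by
  intro m; by_cases h : m = a <;> simp [h, Complex.conj_I]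

noncomputable def signU (b : Fin d) : UG d :=
  diagU (fun m => if m = b then (-1:ℂ) else 1) (sign_g_unit b)

noncomputable def phaseU (a : Fin d) : UG d :=
  diagU (fun m => if m = a then Complex.I else 1) (phase_g_unit a)

lemma X_signU (k b m : Fin d) (U : UG d) : X k m (signU b * U) = X k m U := by
  rw [signU]
  exact X_diagU k _ (sign_g_unit b) (fun m => by by_cases h : m = b <;> simp [h]) U m

lemma X_phaseU (k a m : Fin d) (U : UG d) : X k m (phaseU a * U) = X k m U := by
  rw [phaseU]
  exact X_diagU k _ (phase_g_unit a) (fun m => by by_cases h : m = a <;> simp [h]) U m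

lemma Cr_signU {k a b : Fin d} (hab : a ≠ b) (U : UG d) :
    Cr k a b (signU b * U) = - Cr k a b U := by
  rw [Cr, Cr, signU, diagU_entry, diagU_entry, if_neg hab, if_pos rfl, one_mul]
  have h : (U : Matrix (Fin d) (Fin d) ℂ) a k *
      (starRingEnd ℂ) (-1 * (U : Matrix (Fin d) (Fin d) ℂ) b k)
      = -((U : Matrix (Fin d) (Fin d) ℂ) a k *
        (starRingEnd ℂ) ((U : Matrix (Fin d) (Fin d) ℂ) b k)) := by
    rw [neg_one_mul, map_neg]; ring
  rw [h, Complex.neg_re]; ring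

lemma W_phaseU {k a b : Fin d} (hab : a ≠ b) (U : UG d) :
    W k a b (phaseU a * U) = - W k a b U := by
  rw [W, W, phaseU, diagU_entry, diagU_entry, if_pos rfl, if_neg (fun hc => hab hc.symm),
    one_mul]
  have h : (Complex.I * (U : Matrix (Fin d) (Fin d) ℂ) a k *
      (starRingEnd ℂ) ((U : Matrix (Fin d) (Fin d) ℂ) b k)) ^ 2
      = -(((U : Matrix (Fin d) (Fin d) ℂ) a k *
      (starRingEnd ℂ) ((U : Matrix (Fin d) (Fin d) ℂ) b k)) ^ 2) := by
    have h2 : (Complex.I * (U : Matrix (Fin d) (Fin d) ℂ) a k *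
        (starRingEnd ℂ) ((U : Matrix (Fin d) (Fin d) ℂ) b k)) ^ 2
        = Complex.I ^ 2 * ((U : Matrix (Fin d) (Fin d) ℂ) a k *
          (starRingEnd ℂ) ((U : Matrix (Fin d) (Fin d) ℂ) b k)) ^ 2 := by ring
    rw [h2, Complex.I_sq]; ring
  rw [h, Complex.neg_re]


/-! ### the moments -/

section Moments

variable (k : Fin d) (μ : Measure (UG d)) [IsProbabilityMeasure μ]

noncomputable def J1 (a : Fin d) : ℝ := ∫ U, X k a U ∂μ
noncomputable def J2 (a b : Fin d) : ℝ := ∫ U, X k a U * X k b U ∂μ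
noncomputable def J3 (a b e : Fin d) : ℝ := ∫ U, X k a U * X k b U * X k e U ∂μ

lemma abs_X_le (a : Fin d) (U : UG d) : |X k a U| ≤ 1 := by
  rw [abs_of_nonneg (X_nonneg k a U)]; exact X_le_one k a U

lemma integrable_X1 (a : Fin d) : Integrable (fun U => X k a U) μ :=
  integrable_of_bound μ (measurable_X k a) 1 (abs_X_le k a)

lemma integrable_X2 (a b : Fin d) : Integrable (fun U => X k a U * X k b U) μ := by
  refine integrable_of_bound μ ((measurable_X k a).mul (measurable_X k b)) 1 (fun U => ?_)
  rw [abs_mul]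
  exact mul_le_one₀ (abs_X_le k a U) (abs_nonneg _) (abs_X_le k b U)

lemma integrable_X3 (a b e : Fin d) :
    Integrable (fun U => X k a U * X k b U * X k e U) μ := by
  refine integrable_of_bound μ
    (((measurable_X k a).mul (measurable_X k b)).mul (measurable_X k e)) 1 (fun U => ?_)
  rw [abs_mul, abs_mul]
  exact mul_le_one₀ (mul_le_one₀ (abs_X_le k a U) (abs_nonneg _) (abs_X_le k b U))
    (abs_nonneg _) (abs_X_le k e U)

lemma integrable_W (a b : Fin d) : Integrable (fun U => W k a b U) μ :=
  integrable_of_bound μ (measurable_W k a b) 1 (abs_W_le k a b)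

lemma integrable_WX (a b e : Fin d) : Integrable (fun U => W k a b U * X k e U) μ := by
  refine integrable_of_bound μ ((measurable_W k a b).mul (measurable_X k e)) 1 (fun U => ?_)
  rw [abs_mul]
  exact mul_le_one₀ (abs_W_le k a b U) (abs_nonneg _) (abs_X_le k e U)

lemma integrable_XCr (a b : Fin d) :
    Integrable (fun U => (X k a U + X k b U) * Cr k a b U) μ := by
  refine integrable_of_bound μ
    (((measurable_X k a).add (measurable_X k b)).mul (measurable_Cr k a b)) 4 (fun U => ?_)
  rw [abs_mul]
  have h1 : |X k a U + X k b U| ≤ 2 := by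
    have := abs_X_le k a U; have := abs_X_le k b U
    calc |X k a U + X k b U| ≤ |X k a U| + |X k b U| := abs_add_le _ _
      _ ≤ 2 := by linarith
  have h2 := abs_Cr_le k a b U
  nlinarith [abs_nonneg (X k a U + X k b U), abs_nonneg (Cr k a b U)]

lemma integrable_XCrX (a b e : Fin d) :
    Integrable (fun U => (X k a U + X k b U) * Cr k a b U * X k e U) μ := by
  refine integrable_of_bound μ
    ((((measurable_X k a).add (measurable_X k b)).mul (measurable_Cr k a b)).mul
      (measurable_X k e)) 4 (fun U => ?_)
  rw [abs_mul, abs_mul]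
  have h1 : |X k a U + X k b U| ≤ 2 := by
    have := abs_X_le k a U; have := abs_X_le k b U
    calc |X k a U + X k b U| ≤ |X k a U| + |X k b U| := abs_add_le _ _
      _ ≤ 2 := by linarith
  have h2 := abs_Cr_le k a b U
  have h3 := abs_X_le k e U
  have h12 : |X k a U + X k b U| * |Cr k a b U| ≤ 4 := by
    nlinarith [abs_nonneg (X k a U + X k b U), abs_nonneg (Cr k a b U)]
  have h4 : |X k a U + X k b U| * |Cr k a b U| * |X k e U| ≤ 4 * 1 :=
    mul_le_mul h12 h3 (abs_nonneg _) (by norm_num)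
  linarith

/-! #### permutation symmetry -/

lemma J1_perm (hμ : ∀ V : UG d, μ.map (fun U => V * U) = μ)
    (σ : Equiv.Perm (Fin d)) (a : Fin d) : J1 k μ (σ a) = J1 k μ a := by
  have h := integral_mulLeft μ hμ (permU σ) (measurable_X k a)
  calc J1 k μ (σ a) = ∫ U, X k a (permU σ * U) ∂μ :=
        integral_congr_ae (ae_of_all _ fun U => (X_permU k σ U a).symm)
    _ = J1 k μ a := h

lemma J2_perm (hμ : ∀ V : UG d, μ.map (fun U => V * U) = μ)
    (σ : Equiv.Perm (Fin d)) (a b : Fin d) :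
    J2 k μ (σ a) (σ b) = J2 k μ a b := by
  have h := integral_mulLeft μ hμ (permU σ) ((measurable_X k a).mul (measurable_X k b))
  calc J2 k μ (σ a) (σ b) = ∫ U, X k a (permU σ * U) * X k b (permU σ * U) ∂μ :=
        integral_congr_ae (ae_of_all _ fun U => by dsimp only; rw [X_permU, X_permU])
    _ = J2 k μ a b := h

lemma J3_perm (hμ : ∀ V : UG d, μ.map (fun U => V * U) = μ)
    (σ : Equiv.Perm (Fin d)) (a b e : Fin d) :
    J3 k μ (σ a) (σ b) (σ e) = J3 k μ a b e := by
  have h := integral_mulLeft μ hμ (permU σ)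
    (((measurable_X k a).mul (measurable_X k b)).mul (measurable_X k e))
  calc J3 k μ (σ a) (σ b) (σ e)
      = ∫ U, X k a (permU σ * U) * X k b (permU σ * U) * X k e (permU σ * U) ∂μ :=
        integral_congr_ae (ae_of_all _ fun U => by dsimp only; rw [X_permU, X_permU, X_permU])
    _ = J3 k μ a b e := h

/-! #### rearrangement -/

lemma J3_rearr_231 (a b e : Fin d) : J3 k μ a b e = J3 k μ b e a := by
  rw [J3, J3]; exact integral_congr_ae (ae_of_all _ fun U => by ring)

lemma J3_rearr_213 (a b e : Fin d) : J3 k μ a b e = J3 k μ b a e := by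
  rw [J3, J3]; exact integral_congr_ae (ae_of_all _ fun U => by ring)

/-! #### sum relations -/

lemma sum_J1 : ∑ m, J1 k μ m = 1 := by
  have h : ∑ m, J1 k μ m = ∫ U, ∑ m, X k m U ∂μ :=
    (integral_finset_sum _ (fun m _ => integrable_X1 k μ m)).symm
  rw [h]
  have h2 : ∀ U : UG d, ∑ m, X k m U = 1 := sum_X k
  rw [integral_congr_ae (ae_of_all _ h2)]
  simp

lemma sum_J2 (a : Fin d) : ∑ m, J2 k μ a m = J1 k μ a := by
  have h : ∑ m, J2 k μ a m = ∫ U, ∑ m, X k a U * X k m U ∂μ :=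
    (integral_finset_sum _ (fun m _ => integrable_X2 k μ a m)).symm
  rw [h, J1]
  refine integral_congr_ae (ae_of_all _ fun U => ?_)
  dsimp only
  rw [← Finset.mul_sum, sum_X, mul_one]

lemma sum_J3 (a b : Fin d) : ∑ m, J3 k μ a b m = J2 k μ a b := by
  have h : ∑ m, J3 k μ a b m = ∫ U, ∑ m, X k a U * X k b U * X k m U ∂μ :=
    (integral_finset_sum _ (fun m _ => integrable_X3 k μ a b m)).symm
  rw [h, J2]
  refine integral_congr_ae (ae_of_all _ fun U => ?_)
  dsimp only
  rw [← Finset.mul_sum, sum_X, mul_one]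

/-! #### vanishing of cross terms -/

lemma int_XCr_zero (hμ : ∀ V : UG d, μ.map (fun U => V * U) = μ) {a b : Fin d} (hab : a ≠ b) :
    ∫ U, (X k a U + X k b U) * Cr k a b U ∂μ = 0 := by
  refine integral_zero_of_flip μ hμ (signU b)
    (((measurable_X k a).add (measurable_X k b)).mul (measurable_Cr k a b)) (fun U => ?_)
  rw [X_signU, X_signU, Cr_signU hab]; ring

lemma int_W_zero (hμ : ∀ V : UG d, μ.map (fun U => V * U) = μ) {a b : Fin d} (hab : a ≠ b) :
    ∫ U, W k a b U ∂μ = 0 :=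
  integral_zero_of_flip μ hμ (phaseU a) (measurable_W k a b) (fun U => W_phaseU hab U)

lemma int_WX_zero (hμ : ∀ V : UG d, μ.map (fun U => V * U) = μ) {a b e : Fin d}
    (hab : a ≠ b) (hea : e ≠ a) :
    ∫ U, W k a b U * X k e U ∂μ = 0 := by
  refine integral_zero_of_flip μ hμ (phaseU a)
    ((measurable_W k a b).mul (measurable_X k e)) (fun U => ?_)
  rw [X_phaseU, W_phaseU hab]; ring

lemma int_XCrX_zero (hμ : ∀ V : UG d, μ.map (fun U => V * U) = μ) {a b e : Fin d}
    (hab : a ≠ b) :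
    ∫ U, (X k a U + X k b U) * Cr k a b U * X k e U ∂μ = 0 := by
  refine integral_zero_of_flip μ hμ (signU b)
    ((((measurable_X k a).add (measurable_X k b)).mul (measurable_Cr k a b)).mul
      (measurable_X k e)) (fun U => ?_)
  rw [X_signU, X_signU, X_signU, Cr_signU hab]; ring

/-! #### rotation relations -/

lemma rot2 (hμ : ∀ V : UG d, μ.map (fun U => V * U) = μ) {a b : Fin d} (hab : a ≠ b) :
    J2 k μ a a = 2 * J2 k μ a b := by
  have hinv := integral_mulLeft μ hμ (HadU a b hab) (f := fun U => X k a U * X k a U)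
    ((measurable_X k a).mul (measurable_X k a))
  have hpt : ∀ U : UG d, X k a (HadU a b hab * U) * X k a (HadU a b hab * U)
      = (1/4) * (X k a U * X k a U + X k b U * X k b U + 4 * (X k a U * X k b U)
        + 2 * (W k a b U) + 2 * ((X k a U + X k b U) * Cr k a b U)) := by
    intro U
    rw [X_HadU_left hab U]
    linear_combination (1/4 : ℝ) * Cr_sq k a b U
  have hL : ∫ U, X k a (HadU a b hab * U) * X k a (HadU a b hab * U) ∂μ
      = (1/4) * (J2 k μ a a + J2 k μ b b + 4 * J2 k μ a b + 2 * 0 + 2 * 0) := by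
    rw [integral_congr_ae (ae_of_all _ hpt), integral_const_mul]
    congr 1
    rw [integral_add, integral_add, integral_add, integral_add]
    · rw [integral_const_mul, integral_const_mul, integral_const_mul,
        int_W_zero k μ hμ hab, int_XCr_zero k μ hμ hab]
      rfl
    · exact integrable_X2 k μ a a
    · exact integrable_X2 k μ b b
    · exact (integrable_X2 k μ a a).add (integrable_X2 k μ b b)
    · exact (integrable_X2 k μ a b).const_mul 4
    · exact ((integrable_X2 k μ a a).add (integrable_X2 k μ b b)).add
        ((integrable_X2 k μ a b).const_mul 4)
    · exact (integrable_W k μ a b).const_mul 2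
    · exact (((integrable_X2 k μ a a).add (integrable_X2 k μ b b)).add
        ((integrable_X2 k μ a b).const_mul 4)).add ((integrable_W k μ a b).const_mul 2)
    · exact (integrable_XCr k μ a b).const_mul 2
  have hbb : J2 k μ b b = J2 k μ a a := by
    have h := J2_perm k μ hμ (Equiv.swap a b) b b
    rw [Equiv.swap_apply_right] at h
    exact h.symm
  rw [hinv, hbb] at hL
  have hfin : J2 k μ a a
      = (1/4) * (J2 k μ a a + J2 k μ a a + 4 * J2 k μ a b + 2 * 0 + 2 * 0) := by
    rw [J2]; exact hL
  linarith

lemma rot3 (hμ : ∀ V : UG d, μ.map (fun U => V * U) = μ) {a b e : Fin d}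
    (hab : a ≠ b) (hea : e ≠ a) (heb : e ≠ b) :
    J3 k μ a a e = 2 * J3 k μ a b e := by
  have hinv := integral_mulLeft μ hμ (HadU a b hab) (f := fun U => X k a U * X k a U * X k e U)
    (((measurable_X k a).mul (measurable_X k a)).mul (measurable_X k e))
  have hpt : ∀ U : UG d,
      X k a (HadU a b hab * U) * X k a (HadU a b hab * U) * X k e (HadU a b hab * U)
      = (1/4) * (X k a U * X k a U * X k e U + X k b U * X k b U * X k e U
        + 4 * (X k a U * X k b U * X k e U)
        + 2 * (W k a b U * X k e U) + 2 * ((X k a U + X k b U) * Cr k a b U * X k e U)) := by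
    intro U
    rw [X_HadU_left hab U, X_HadU_other hab hea heb U]
    linear_combination ((1/4 : ℝ) * X k e U) * Cr_sq k a b U
  have hL : ∫ U, X k a (HadU a b hab * U) * X k a (HadU a b hab * U)
        * X k e (HadU a b hab * U) ∂μ
      = (1/4) * (J3 k μ a a e + J3 k μ b b e + 4 * J3 k μ a b e + 2 * 0 + 2 * 0) := by
    rw [integral_congr_ae (ae_of_all _ hpt), integral_const_mul]
    congr 1
    rw [integral_add, integral_add, integral_add, integral_add]
    · rw [integral_const_mul, integral_const_mul, integral_const_mul,
        int_WX_zero k μ hμ hab hea, int_XCrX_zero k μ hμ hab]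
      rfl
    · exact integrable_X3 k μ a a e
    · exact integrable_X3 k μ b b e
    · exact (integrable_X3 k μ a a e).add (integrable_X3 k μ b b e)
    · exact (integrable_X3 k μ a b e).const_mul 4
    · exact ((integrable_X3 k μ a a e).add (integrable_X3 k μ b b e)).add
        ((integrable_X3 k μ a b e).const_mul 4)
    · exact (integrable_WX k μ a b e).const_mul 2
    · exact (((integrable_X3 k μ a a e).add (integrable_X3 k μ b b e)).add
        ((integrable_X3 k μ a b e).const_mul 4)).add ((integrable_WX k μ a b e).const_mul 2)
    · exact (integrable_XCrX k μ a b e).const_mul 2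
  have hbb : J3 k μ b b e = J3 k μ a a e := by
    have h := J3_perm k μ hμ (Equiv.swap a b) b b e
    rw [Equiv.swap_apply_right, Equiv.swap_apply_of_ne_of_ne hea heb] at h
    exact h.symm
  rw [hinv, hbb] at hL
  have hfin : J3 k μ a a e
      = (1/4) * (J3 k μ a a e + J3 k μ a a e + 4 * J3 k μ a b e + 2 * 0 + 2 * 0) := by
    rw [J3]; exact hL
  linarith

end Moments

/-! ### values of the moments -/

section Values

variable (k : Fin d) (μ : Measure (UG d)) [IsProbabilityMeasure μ]

lemma J1_val (hμ : ∀ V : UG d, μ.map (fun U => V * U) = μ) (a : Fin d) : J1 k μ a = 1 / (d:ℝ) := by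
  have hd : 0 < d := k.pos
  have hdne : (d:ℝ) ≠ 0 := Nat.cast_ne_zero.mpr hd.ne'
  have hsum := sum_J1 k μ
  have hc : ∀ m : Fin d, J1 k μ m = J1 k μ a := by
    intro m
    have h := J1_perm k μ hμ (Equiv.swap m a) a
    rw [Equiv.swap_apply_right] at h
    exact h
  rw [Finset.sum_congr rfl (fun m _ => hc m), Finset.sum_const, Finset.card_univ,
    Fintype.card_fin, nsmul_eq_mul] at hsum
  rw [eq_div_iff hdne]
  linarith

lemma J2_offdiag (hμ : ∀ V : UG d, μ.map (fun U => V * U) = μ) {a b : Fin d} (hab : a ≠ b) :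
    J2 k μ a b = 1 / ((d:ℝ) * ((d:ℝ) + 1)) := by
  have hd : 0 < d := k.pos
  have hd0 : (0:ℝ) < (d:ℝ) := by exact_mod_cast hd
  have hdne : (d:ℝ) ≠ 0 := ne_of_gt hd0
  have h2 := sum_J2 k μ a
  rw [J1_val k μ hμ a] at h2
  have herase : ∀ m ∈ Finset.univ.erase a, J2 k μ a m = J2 k μ a b := by
    intro m hm
    have hma : m ≠ a := Finset.ne_of_mem_erase hm
    have h := J2_perm k μ hμ (Equiv.swap b m) a b
    rw [Equiv.swap_apply_left,
      Equiv.swap_apply_of_ne_of_ne hab hma.symm] at h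
    exact h
  rw [← Finset.add_sum_erase _ _ (Finset.mem_univ a), Finset.sum_congr rfl herase,
    Finset.sum_const, Finset.card_erase_of_mem (Finset.mem_univ a), Finset.card_univ,
    Fintype.card_fin, nsmul_eq_mul, rot2 k μ hμ hab] at h2
  have hcast : ((d - 1 : ℕ) : ℝ) = (d:ℝ) - 1 := by
    rw [Nat.cast_sub hd]; norm_num
  rw [hcast] at h2
  field_simp at h2 ⊢
  nlinarith [h2]

lemma J3_aab (hμ : ∀ V : UG d, μ.map (fun U => V * U) = μ) {a b : Fin d} (hab : a ≠ b) :
    J3 k μ a a b = 2 / ((d:ℝ) * ((d:ℝ) + 1) * ((d:ℝ) + 2)) := by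
  have hd : 0 < d := k.pos
  have hd0 : (0:ℝ) < (d:ℝ) := by exact_mod_cast hd
  have hd2 : 2 ≤ d := by
    have : Nontrivial (Fin d) := ⟨⟨a, b, hab⟩⟩
    have h := Fintype.one_lt_card (α := Fin d)
    simp at h; omega
  have hS := sum_J3 k μ a b
  rw [J2_offdiag k μ hμ hab] at hS
  have hfa : J3 k μ a b a = J3 k μ a a b := by
    rw [J3_rearr_231 k μ a b a, J3_rearr_231 k μ b a a]
  have hfb : J3 k μ a b b = J3 k μ a a b := by
    rw [J3_rearr_231 k μ a b b]
    have h := J3_perm k μ hμ (Equiv.swap a b) a a b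
    rw [Equiv.swap_apply_left, Equiv.swap_apply_right] at h
    exact h
  have hm : ∀ m ∈ (Finset.univ.erase a).erase b, J3 k μ a b m = J3 k μ a a b / 2 := by
    intro m hm
    have hmb : m ≠ b := Finset.ne_of_mem_erase hm
    have hma : m ≠ a := Finset.ne_of_mem_erase (Finset.mem_of_mem_erase hm)
    have hr := rot3 k μ hμ hab hma hmb
    have hp := J3_perm k μ hμ (Equiv.swap b m) a a b
    rw [Equiv.swap_apply_left,
      Equiv.swap_apply_of_ne_of_ne hab hma.symm] at hp
    -- hp : J3 a a m = J3 a a b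
    linarith
  have hbmem : b ∈ Finset.univ.erase a := Finset.mem_erase.mpr ⟨hab.symm, Finset.mem_univ b⟩
  rw [← Finset.add_sum_erase _ _ (Finset.mem_univ a),
    ← Finset.add_sum_erase _ _ hbmem, Finset.sum_congr rfl hm, Finset.sum_const,
    Finset.card_erase_of_mem hbmem, Finset.card_erase_of_mem (Finset.mem_univ a),
    Finset.card_univ, Fintype.card_fin, nsmul_eq_mul, hfa, hfb] at hS
  have hcast : ((d - 1 - 1 : ℕ) : ℝ) = (d:ℝ) - 2 := by
    have h : d - 1 - 1 = d - 2 := by omega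
    rw [h, Nat.cast_sub hd2]; norm_num
  rw [hcast] at hS
  -- hS : 1/(d(d+1)) = M + (M + (d-2) * (M/2))
  rw [eq_div_iff (ne_of_gt (by positivity : (0:ℝ) < (d:ℝ) * ((d:ℝ)+1) * ((d:ℝ)+2)))]
  field_simp at hS
  nlinarith [hS]

lemma J3_distinct (hμ : ∀ V : UG d, μ.map (fun U => V * U) = μ) {a b e : Fin d} (hab : a ≠ b) (hea : e ≠ a) (heb : e ≠ b) :
    J3 k μ a b e = 1 / ((d:ℝ) * ((d:ℝ) + 1) * ((d:ℝ) + 2)) := by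
  have hr := rot3 k μ hμ hab hea heb
  have hv := J3_aab k μ hμ (show a ≠ e from hea.symm ∘ Eq.symm ∘ Eq.symm)
  rw [hv] at hr
  have hd : 0 < d := k.pos
  have hd0 : (0:ℝ) < (d:ℝ) := by exact_mod_cast hd
  rw [eq_div_iff (ne_of_gt (by positivity : (0:ℝ) < (d:ℝ) * ((d:ℝ)+1) * ((d:ℝ)+2)))]
  have h2 : (2:ℝ) / ((d:ℝ) * ((d:ℝ)+1) * ((d:ℝ)+2)) * ((d:ℝ) * ((d:ℝ)+1) * ((d:ℝ)+2)) = 2 := by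
    field_simp
  have h3 : 2 * J3 k μ a b e * ((d:ℝ) * ((d:ℝ)+1) * ((d:ℝ)+2)) = 2 := by
    rw [← hr]; exact h2
  linarith

end Values

lemma rhoR_entry {d : ℕ} (r : ℕ) (U : UG d) (k : Fin d) :
    ((star (U : Matrix (Fin d) (Fin d) ℂ) * rhoR d r * (U : Matrix (Fin d) (Fin d) ℂ)) k k).re
      = (r:ℝ)⁻¹ * ∑ l : Fin d, (if (l:ℕ) < r then X k l U else 0) := by
  set Uv := (U : Matrix (Fin d) (Fin d) ℂ) with hUv
  have hterm : ∀ l : Fin d,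
      (star Uv * Matrix.single l l (1:ℂ) * Uv) k k = ((X k l U : ℝ) : ℂ) := by
    intro l
    rw [Matrix.mul_apply]
    have hrow : ∀ q, (star Uv * Matrix.single l l (1:ℂ)) k q
        = if q = l then (star Uv) k l else 0 := by
      intro q
      by_cases h : q = l
      · subst h
        rw [if_pos rfl, Matrix.mul_single_apply_same, mul_one]
      · rw [if_neg h]
        exact Matrix.mul_single_apply_of_ne (c := (1:ℂ)) l l k q h (star Uv)
    calc ∑ q, (star Uv * Matrix.single l l (1:ℂ)) k q * Uv q k
        = ∑ q, (if q = l then (star Uv) k l else 0) * Uv q k := by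
          refine Finset.sum_congr rfl fun q _ => by rw [hrow q]
      _ = (star Uv) k l * Uv l k := by
          simp only [ite_mul, zero_mul, Finset.sum_ite_eq', Finset.mem_univ, if_true]
      _ = ((X k l U : ℝ) : ℂ) := by
          rw [Matrix.star_apply]
          have hc := Complex.conj_mul' (Uv l k)
          rw [show star (Uv l k) = (starRingEnd ℂ) (Uv l k) from rfl, hc]
          simp [X, hUv, ← Complex.ofReal_pow]
  have h1 : star Uv * rhoR d r * Uv
      = (r:ℂ)⁻¹ • ∑ l : Fin d,
          (if (l:ℕ) < r then star Uv * Matrix.single l l (1:ℂ) * Uv else 0) := by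
    rw [rhoR, Matrix.mul_smul, Matrix.smul_mul]
    congr 1
    rw [Matrix.mul_sum, Matrix.sum_mul]
    refine Finset.sum_congr rfl fun l _ => ?_
    by_cases h : (l:ℕ) < r
    · rw [if_pos h, if_pos h]
    · rw [if_neg h, if_neg h, Matrix.mul_zero, Matrix.zero_mul]
  have h2 : (star Uv * rhoR d r * Uv) k k
      = ((((r:ℝ)⁻¹ * ∑ l : Fin d, (if (l:ℕ) < r then X k l U else 0)) : ℝ) : ℂ) := by
    rw [h1, Matrix.smul_apply, Matrix.sum_apply]
    have h3 : ∀ l : Fin d,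
        (if (l:ℕ) < r then star Uv * Matrix.single l l (1:ℂ) * Uv else 0) k k
        = (((if (l:ℕ) < r then X k l U else 0 : ℝ)) : ℂ) := by
      intro l
      by_cases h : (l:ℕ) < r
      · rw [if_pos h, if_pos h, hterm l]
      · rw [if_neg h, if_neg h]
        simp
    rw [Finset.sum_congr rfl (fun l _ => h3 l)]
    rw [← Complex.ofReal_sum]
    rw [Complex.ofReal_mul]
    rw [smul_eq_mul]
    congr 1
    push_cast
    ring
  rw [h2, Complex.ofReal_re]

end CovLS


/-- Second moment of an entry of the off-diagonal `B` block of the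
covariant-measurement LS estimator for `ρ_r`:
`d(d+1)²·∫ ⟨e_k, U*ρ_r U e_k⟩·|U_{ik}|²|U_{jk}|² dU = ((r+1)/r)·((d+1)/(d+2))`
for `1 ≤ i ≤ r < j ≤ d`. -/
theorem covariant_ls_B_entry_moment
    (d r : ℕ) (hd : 2 ≤ d) (hr : 1 ≤ r) (hrd : r < d)
    (μ : Measure (Matrix.unitaryGroup (Fin d) ℂ)) [IsProbabilityMeasure μ]
    (hμ : ∀ V : Matrix.unitaryGroup (Fin d) ℂ, μ.map (fun U => V * U) = μ)
    (k i j : Fin d) (hi : (i : ℕ) < r) (hj : r ≤ (j : ℕ)) :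
    (d : ℝ) * ((d : ℝ) + 1) ^ 2 *
      ∫ U, ((star (U : Matrix (Fin d) (Fin d) ℂ) * rhoR d r * (U : Matrix (Fin d) (Fin d) ℂ)) k k).re *
        (‖(U : Matrix (Fin d) (Fin d) ℂ) i k‖ ^ 2 * ‖(U : Matrix (Fin d) (Fin d) ℂ) j k‖ ^ 2) ∂μ
      = (((r : ℝ) + 1) / (r : ℝ)) * (((d : ℝ) + 1) / ((d : ℝ) + 2)) := by
  classical
  have hdpos : 0 < d := by omega
  have hd0 : (0:ℝ) < (d:ℝ) := by exact_mod_cast hdpos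
  have hr0 : (0:ℝ) < (r:ℝ) := by exact_mod_cast hr
  have hij : i ≠ j := Fin.ne_of_val_ne (by omega)
  have hpt : ∀ U : CovLS.UG d,
      ((star (U : Matrix (Fin d) (Fin d) ℂ) * rhoR d r * (U : Matrix (Fin d) (Fin d) ℂ)) k k).re *
        (‖(U : Matrix (Fin d) (Fin d) ℂ) i k‖ ^ 2 * ‖(U : Matrix (Fin d) (Fin d) ℂ) j k‖ ^ 2)
      = (r:ℝ)⁻¹ * ∑ l : Fin d,
          (if (l:ℕ) < r then CovLS.X k l U * CovLS.X k i U * CovLS.X k j U else 0) := by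
    intro U
    rw [CovLS.rhoR_entry r U k, mul_assoc, Finset.sum_mul]
    congr 1
    refine Finset.sum_congr rfl fun l _ => ?_
    by_cases h : (l:ℕ) < r
    · rw [if_pos h, if_pos h]
      simp only [CovLS.X]
      ring
    · rw [if_neg h, if_neg h, zero_mul]
  rw [integral_congr_ae (ae_of_all _ hpt), integral_const_mul]
  have hint : ∀ l : Fin d, Integrable (fun U : CovLS.UG d =>
      if (l:ℕ) < r then CovLS.X k l U * CovLS.X k i U * CovLS.X k j U else 0) μ := by
    intro l
    by_cases h : (l:ℕ) < r
    · simp only [if_pos h]; exact CovLS.integrable_X3 k μ l i j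
    · simp only [if_neg h]; exact integrable_zero _ _ _
  rw [integral_finset_sum _ (fun l _ => hint l)]
  have hterm : ∀ l : Fin d,
      (∫ U, (if (l:ℕ) < r then CovLS.X k l U * CovLS.X k i U * CovLS.X k j U else 0) ∂μ)
      = if (l:ℕ) < r then
          (if l = i then 2 / ((d:ℝ) * ((d:ℝ)+1) * ((d:ℝ)+2))
            else 1 / ((d:ℝ) * ((d:ℝ)+1) * ((d:ℝ)+2))) else 0 := by
    intro l
    by_cases h : (l:ℕ) < r
    · simp only [if_pos h]
      by_cases hli : l = i
      · subst hli
        rw [if_pos rfl]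
        exact CovLS.J3_aab k μ hμ (Fin.ne_of_val_ne (by omega))
      · rw [if_neg hli]
        have hjl : j ≠ l := Fin.ne_of_val_ne (by omega)
        exact CovLS.J3_distinct k μ hμ hli hjl hij.symm
    · simp only [if_neg h]
      exact integral_zero _ _
  rw [Finset.sum_congr rfl (fun l _ => hterm l)]
  have hsplit : ∀ l : Fin d,
      (if (l:ℕ) < r then
          (if l = i then 2 / ((d:ℝ) * ((d:ℝ)+1) * ((d:ℝ)+2))
            else 1 / ((d:ℝ) * ((d:ℝ)+1) * ((d:ℝ)+2))) else 0)
      = (if (l:ℕ) < r then 1 / ((d:ℝ) * ((d:ℝ)+1) * ((d:ℝ)+2)) else 0)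
        + (if l = i then (if (l:ℕ) < r then 1 / ((d:ℝ) * ((d:ℝ)+1) * ((d:ℝ)+2)) else 0)
            else 0) := by
    intro l
    by_cases h1 : (l:ℕ) < r
    · rw [if_pos h1, if_pos h1]
      by_cases h2 : l = i
      · rw [if_pos h2, if_pos h2]; ring
      · rw [if_neg h2, if_neg h2, add_zero]
    · rw [if_neg h1, if_neg h1]
      by_cases h2 : l = i
      · rw [if_pos h2]; norm_num
      · rw [if_neg h2]; norm_num
  rw [Finset.sum_congr rfl (fun l _ => hsplit l), Finset.sum_add_distrib]
  have hs1 : ∑ l : Fin d, (if (l:ℕ) < r then 1 / ((d:ℝ) * ((d:ℝ)+1) * ((d:ℝ)+2)) else 0)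
      = (r:ℝ) * (1 / ((d:ℝ) * ((d:ℝ)+1) * ((d:ℝ)+2))) := by
    have h1 : ∀ l : Fin d, (if (l:ℕ) < r then 1 / ((d:ℝ) * ((d:ℝ)+1) * ((d:ℝ)+2)) else 0)
        = (if (l:ℕ) < r then (1:ℝ) else 0) * (1 / ((d:ℝ) * ((d:ℝ)+1) * ((d:ℝ)+2))) := by
      intro l; by_cases h : (l:ℕ) < r <;> simp [h]
    rw [Finset.sum_congr rfl (fun l _ => h1 l), ← Finset.sum_mul]
    have h2 : ∑ l : Fin d, (if (l:ℕ) < r then (1:ℝ) else 0) = (r:ℝ) := by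
      rw [Fin.sum_univ_eq_sum_range (fun n => if n < r then (1:ℝ) else 0) d]
      rw [Finset.sum_boole]
      have h3 : (Finset.range d).filter (fun n => n < r) = Finset.range r := by
        ext x
        simp only [Finset.mem_filter, Finset.mem_range]
        omega
      rw [h3, Finset.card_range]
    rw [h2]
  have hs2 : ∑ l : Fin d,
      (if l = i then (if (l:ℕ) < r then 1 / ((d:ℝ) * ((d:ℝ)+1) * ((d:ℝ)+2)) else 0) else 0)
      = 1 / ((d:ℝ) * ((d:ℝ)+1) * ((d:ℝ)+2)) := by
    rw [Finset.sum_ite_eq' Finset.univ i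
      (fun l => if (l:ℕ) < r then 1 / ((d:ℝ) * ((d:ℝ)+1) * ((d:ℝ)+2)) else 0)]
    simp [hi]
  rw [hs1, hs2]
  field_simp
end

section
/- Let d ≥ 2, 1 ≤ r ≤ d−1, and ρ_r = (1/r) Σ_{l=1}^r E_{ll}. Then for any k ∈ {1,…,d}: (i) for every index i with r < i ≤ d, the diagonal-entry variance of the C block of the covariant-measurement least squares estimator satisfies d · ∫_{U(d)} ⟨e_k, U*ρ_r U e_k⟩ · ((d+1)|U_{ik}|² − 1)² dU = d/(d+2); and (ii) if moreover r ≤ d−2, for all distinct indices i ≠ j with r < i, j ≤ d, the corresponding covariance satisfies d · ∫_{U(d)} ⟨e_k, U*ρ_r U e_k⟩ · ((d+1)|U_{ik}|² − 1)((d+1)|U_{jk}|² − 1) dU = −1/(d+2). -/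
open MeasureTheory ProbabilityTheory Matrix
open scoped ComplexOrder

namespace CovAux14

variable {d : ℕ}

abbrev UG (d : ℕ) := Matrix.unitaryGroup (Fin d) ℂ

noncomputable def X (k a : Fin d) (U : UG d) : ℝ := ‖(U : Matrix (Fin d) (Fin d) ℂ) a k‖ ^ 2

lemma measurable_entry (a b : Fin d) :
    Measurable fun U : UG d => (U : Matrix (Fin d) (Fin d) ℂ) a b :=
  (measurable_pi_apply b).comp ((measurable_pi_apply a).comp measurable_subtype_coe)

lemma measurable_X (k a : Fin d) : Measurable (X k a) :=
  ((measurable_entry a k).norm).pow_const 2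

lemma X_nonneg (k a : Fin d) (U : UG d) : 0 ≤ X k a U := by unfold X; positivity

lemma sum_X (k : Fin d) (U : UG d) : ∑ a, X k a U = 1 := by
  have h := U.2.1
  have h2 := congrArg (fun M => (M k k).re) h
  simp only [Matrix.mul_apply, Matrix.star_apply, Matrix.one_apply_eq, Complex.one_re] at h2
  rw [← h2, Complex.re_sum]
  apply Finset.sum_congr rfl
  intro a _
  rw [Complex.star_def, mul_comm, Complex.mul_conj]
  simp [X, Complex.normSq_eq_norm_sq, ← Complex.ofReal_pow]

lemma X_le_one (k a : Fin d) (U : UG d) : X k a U ≤ 1 :=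
  le_of_le_of_eq (Finset.single_le_sum (fun b _ => X_nonneg k b U) (Finset.mem_univ a)) (sum_X k U)

lemma abs_X_le_one (k a : Fin d) (U : UG d) : |X k a U| ≤ 1 :=
  abs_le.2 ⟨by linarith [X_nonneg k a U], X_le_one k a U⟩

lemma measurable_mulL (V : UG d) : Measurable fun U : UG d => V * U := by
  apply Measurable.subtype_mk
  show Measurable fun U : UG d => (V : Matrix (Fin d) (Fin d) ℂ) * (U : Matrix (Fin d) (Fin d) ℂ)
  apply measurable_pi_lambda; intro a
  apply measurable_pi_lambda; intro b
  simp only [Matrix.mul_apply]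
  exact Finset.measurable_sum _ fun c _ => (measurable_const.mul (measurable_entry c b))

/-! ### sums with small support -/

lemma sum_split (a b : Fin d) (hab : a ≠ b) (g : Fin d → ℂ)
    (hg : ∀ c, c ≠ a → c ≠ b → g c = 0) : ∑ c, g c = g a + g b := by
  rw [← Finset.sum_subset (Finset.subset_univ {a, b})]
  · rw [Finset.sum_pair hab]
  · intro c _ hc
    simp only [Finset.mem_insert, Finset.mem_singleton, not_or] at hc
    exact hg c hc.1 hc.2

/-! ### the mixing unitary -/

noncomputable def s2 : ℂ := ((Real.sqrt 2 : ℝ)⁻¹ : ℝ)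

lemma s2_sq : s2 * s2 = 1/2 := by
  simp only [s2, ← Complex.ofReal_mul, ← Real.sqrt_inv]
  rw [Real.mul_self_sqrt (by norm_num)]
  norm_num

lemma star_s2 : star s2 = s2 := by simp [s2, Complex.star_def]

noncomputable def Wfun (a b : Fin d) (z : ℂ) : Matrix (Fin d) (Fin d) ℂ :=
  fun p q => if p = a then (if q = a then s2 else if q = b then s2 * z else 0)
    else if p = b then (if q = a then -s2 else if q = b then s2 * z else 0)
    else if p = q then 1 else 0

section W
variable {a b : Fin d} (hab : a ≠ b) (z : ℂ)

lemma W_row_a (q : Fin d) :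
    Wfun a b z a q = if q = a then s2 else if q = b then s2 * z else 0 := by
  simp [Wfun]

include hab in
lemma W_row_b (q : Fin d) :
    Wfun a b z b q = if q = a then -s2 else if q = b then s2 * z else 0 := by
  simp [Wfun, hab.symm]

lemma W_row_other {p : Fin d} (hpa : p ≠ a) (hpb : p ≠ b) (q : Fin d) :
    Wfun a b z p q = if p = q then 1 else 0 := by
  simp [Wfun, hpa, hpb]

include hab in
lemma Wmem (hz : z * star z = 1) : Wfun a b z ∈ Matrix.unitaryGroup (Fin d) ℂ := by
  rw [Matrix.mem_unitaryGroup_iff]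
  ext p q
  rw [Matrix.mul_apply, Matrix.one_apply]
  simp only [Matrix.star_apply]
  have hba : b ≠ a := Ne.symm hab
  by_cases hpa : p = a
  · simp only [hpa]
    by_cases hqa : q = a
    · simp only [hqa]
      rw [sum_split a b hab _ (fun c hca hcb => by
        rw [W_row_a, if_neg hca, if_neg hcb, zero_mul])]
      simp only [W_row_a, if_pos rfl, if_neg hba, if_pos rfl, eq_self_iff_true, if_true]
      rw [star_s2, star_mul', star_s2]
      linear_combination (1 + z * star z) * s2_sq + (1/2 : ℂ) * hz
    · by_cases hqb : q = b
      · simp only [hqb]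
        rw [sum_split a b hab _ (fun c hca hcb => by
          rw [W_row_a, if_neg hca, if_neg hcb, zero_mul])]
        simp only [W_row_a, W_row_b hab, if_pos rfl, if_neg hba, if_neg hab, if_pos rfl]
        simp only [if_true, star_neg, star_mul', star_s2]
        linear_combination (z * star z - 1) * s2_sq + (1/2 : ℂ) * hz
      · rw [sum_split a b hab _ (fun c hca hcb => by
          rw [W_row_a, if_neg hca, if_neg hcb, zero_mul])]
        rw [W_row_a, W_row_a, if_pos rfl, if_neg hba, if_pos rfl,
          W_row_other z hqa hqb, W_row_other z hqa hqb, if_neg hqa, if_neg hqb,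
          if_neg (fun h : a = q => hqa h.symm)]
        simp
  · by_cases hpb : p = b
    · simp only [hpb]
      by_cases hqa : q = a
      · simp only [hqa]
        rw [sum_split a b hab _ (fun c hca hcb => by
          rw [W_row_b hab, if_neg hca, if_neg hcb, zero_mul])]
        simp only [W_row_a, W_row_b hab, if_pos rfl, if_neg hba, if_neg hab, if_pos rfl]
        simp only [if_true, star_neg, star_mul', star_s2, star_s2]
        linear_combination (z * star z - 1) * s2_sq + (1/2 : ℂ) * hz
      · by_cases hqb : q = b
        · simp only [hqb]
          rw [sum_split a b hab _ (fun c hca hcb => by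
            rw [W_row_b hab, if_neg hca, if_neg hcb, zero_mul])]
          simp only [W_row_b hab, if_pos rfl, if_neg hba, if_pos rfl, eq_self_iff_true, if_true]
          rw [star_neg, star_s2, star_mul', star_s2]
          linear_combination (1 + z * star z) * s2_sq + (1/2 : ℂ) * hz
        · rw [sum_split a b hab _ (fun c hca hcb => by
            rw [W_row_b hab, if_neg hca, if_neg hcb, zero_mul])]
          rw [W_row_b hab, W_row_b hab, if_pos rfl, if_neg hba, if_pos rfl,
            W_row_other z hqa hqb, W_row_other z hqa hqb, if_neg hqa, if_neg hqb,
            if_neg (fun h : b = q => hqb h.symm)]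
          simp
    · rw [Finset.sum_eq_single p (fun c _ hcp => by
        rw [W_row_other z hpa hpb, if_neg (fun h : p = c => hcp h.symm), zero_mul])
        (fun h => absurd (Finset.mem_univ p) h)]
      rw [W_row_other z hpa hpb, if_pos rfl, one_mul]
      by_cases hqa : q = a
      · simp only [hqa]
        rw [W_row_a, if_neg hpa, if_neg hpb, if_neg (fun h : p = a => hpa h)]
        simp
      · by_cases hqb : q = b
        · simp only [hqb]
          rw [W_row_b hab, if_neg hpa, if_neg hpb, if_neg (fun h : p = b => hpb h)]
          simp
        · rw [W_row_other z hqa hqb]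
          by_cases hpq : p = q
          · rw [if_pos hpq, if_pos hpq.symm]; simp
          · rw [if_neg hpq, if_neg (fun h : q = p => hpq h.symm)]; simp

noncomputable def mixU (hab : a ≠ b) (z : ℂ) (hz : z * star z = 1) : UG d :=
  ⟨Wfun a b z, Wmem hab z hz⟩

lemma mix_entry (hz : z * star z = 1) (U : UG d) (k : Fin d) :
    ((mixU hab z hz * U : UG d) : Matrix (Fin d) (Fin d) ℂ) a k
      = s2 * ((U : Matrix (Fin d) (Fin d) ℂ) a k + z * (U : Matrix (Fin d) (Fin d) ℂ) b k) := by
  show (Wfun a b z * (U : Matrix (Fin d) (Fin d) ℂ)) a k = _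
  rw [Matrix.mul_apply, sum_split a b hab _ (fun c hca hcb => by
    rw [W_row_a, if_neg hca, if_neg hcb, zero_mul])]
  rw [W_row_a, W_row_a, if_pos rfl, if_neg (Ne.symm hab), if_pos rfl]
  ring

lemma norm_s2_sq : ‖s2‖ ^ 2 = 1/2 := by
  rw [s2, Complex.norm_real, Real.norm_eq_abs, abs_of_nonneg (by positivity),
    ← Real.sqrt_inv, Real.sq_sqrt (by norm_num)]
  norm_num

lemma X_mix (k : Fin d) (hz : z * star z = 1) (U : UG d) :
    X k a (mixU hab z hz * U)
      = ‖(U : Matrix (Fin d) (Fin d) ℂ) a k + z * (U : Matrix (Fin d) (Fin d) ℂ) b k‖ ^ 2 / 2 := by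
  unfold X
  rw [mix_entry hab z hz U k, norm_mul, mul_pow, norm_s2_sq]
  ring

end W

/-! ### permutation unitaries -/

def permM (σ : Equiv.Perm (Fin d)) : Matrix (Fin d) (Fin d) ℂ :=
  (1 : Matrix (Fin d) (Fin d) ℂ).submatrix σ id

lemma permM_mem (σ : Equiv.Perm (Fin d)) : permM σ ∈ Matrix.unitaryGroup (Fin d) ℂ := by
  rw [Matrix.mem_unitaryGroup_iff, permM, Matrix.star_eq_conjTranspose,
    Matrix.conjTranspose_submatrix, Matrix.conjTranspose_one]
  rw [show (id : Fin d → Fin d) = ⇑(Equiv.refl (Fin d)) from rfl, Matrix.submatrix_mul_equiv,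
    Matrix.one_mul, Matrix.submatrix_one_equiv]

lemma permM_mul (σ : Equiv.Perm (Fin d)) (M : Matrix (Fin d) (Fin d) ℂ) :
    permM σ * M = M.submatrix σ id := by
  rw [permM, show (id : Fin d → Fin d) = ⇑(Equiv.refl (Fin d)) from rfl,
    Matrix.one_submatrix_mul]
  rfl

def permU (σ : Equiv.Perm (Fin d)) : UG d := ⟨permM σ, permM_mem σ⟩

lemma X_perm (k : Fin d) (σ : Equiv.Perm (Fin d)) (c : Fin d) (U : UG d) :
    X k c (permU σ * U) = X k (σ c) U := by
  show ‖(permM σ * (U : Matrix (Fin d) (Fin d) ℂ)) c k‖ ^ 2 = _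
  rw [permM_mul, Matrix.submatrix_apply]
  rfl

/-! ### pointwise mixing identities -/

lemma pt2 (u v : ℂ) :
    (‖u + 1 * v‖^2/2)*(‖u + 1 * v‖^2/2) + (‖u + Complex.I * v‖^2/2)*(‖u + Complex.I * v‖^2/2)
    + (‖u + (-1) * v‖^2/2)*(‖u + (-1) * v‖^2/2)
    + (‖u + (-Complex.I) * v‖^2/2)*(‖u + (-Complex.I) * v‖^2/2)
    = (‖u‖^2)*(‖u‖^2) + (‖v‖^2)*(‖v‖^2) + 4*((‖u‖^2)*(‖v‖^2)) := by
  simp only [Complex.sq_norm, Complex.normSq_apply, Complex.add_re,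
    Complex.add_im, Complex.mul_re, Complex.mul_im, Complex.I_re, Complex.I_im,
    Complex.one_re, Complex.one_im, Complex.neg_re, Complex.neg_im]
  ring

lemma pt3 (u v : ℂ) :
    (‖u + 1 * v‖^2/2)*(‖u + 1 * v‖^2/2)*(‖u + 1 * v‖^2/2)
    + (‖u + Complex.I * v‖^2/2)*(‖u + Complex.I * v‖^2/2)*(‖u + Complex.I * v‖^2/2)
    + (‖u + (-1) * v‖^2/2)*(‖u + (-1) * v‖^2/2)*(‖u + (-1) * v‖^2/2)
    + (‖u + (-Complex.I) * v‖^2/2)*(‖u + (-Complex.I) * v‖^2/2)*(‖u + (-Complex.I) * v‖^2/2)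
    = (1/2)*((‖u‖^2)*(‖u‖^2)*(‖u‖^2)) + (1/2)*((‖v‖^2)*(‖v‖^2)*(‖v‖^2))
      + (9/2)*((‖u‖^2)*(‖u‖^2)*(‖v‖^2)) + (9/2)*((‖u‖^2)*(‖v‖^2)*(‖v‖^2)) := by
  simp only [Complex.sq_norm, Complex.normSq_apply, Complex.add_re,
    Complex.add_im, Complex.mul_re, Complex.mul_im, Complex.I_re, Complex.I_im,
    Complex.one_re, Complex.one_im, Complex.neg_re, Complex.neg_im]
  ring

end CovAux14

namespace CovAux14
section Meas
variable {d : ℕ} (k : Fin d) (μ : Measure (UG d)) [IsProbabilityMeasure μ]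

lemma integrable_of_bdd {f : UG d → ℝ} (hf : Measurable f) (C : ℝ) (hC : ∀ U, |f U| ≤ C) :
    Integrable f μ := by
  refine (integrable_const C).mono' hf.aestronglyMeasurable ?_
  exact Filter.Eventually.of_forall fun U => by simpa using hC U

lemma int_mul2 {f g : UG d → ℝ} (hf : Measurable f) (hg : Measurable g)
    (bf : ∀ U, |f U| ≤ 1) (bg : ∀ U, |g U| ≤ 1) : Integrable (fun U => f U * g U) μ := by
  refine integrable_of_bdd μ (hf.mul hg) 1 fun U => ?_
  rw [abs_mul]
  exact mul_le_one₀ (bf U) (abs_nonneg _) (bg U)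

lemma int_mul3 {f g h : UG d → ℝ} (hf : Measurable f) (hg : Measurable g) (hh : Measurable h)
    (bf : ∀ U, |f U| ≤ 1) (bg : ∀ U, |g U| ≤ 1) (bh : ∀ U, |h U| ≤ 1) :
    Integrable (fun U => f U * g U * h U) μ := by
  refine int_mul2 μ (hf.mul hg) hh (fun U => ?_) bh
  rw [abs_mul]
  exact mul_le_one₀ (bf U) (abs_nonneg _) (bg U)

lemma int_X (a : Fin d) : Integrable (X k a) μ :=
  integrable_of_bdd μ (measurable_X k a) 1 (abs_X_le_one k a)

lemma int_XX (a b : Fin d) : Integrable (fun U => X k a U * X k b U) μ :=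
  int_mul2 μ (measurable_X k a) (measurable_X k b) (abs_X_le_one k a) (abs_X_le_one k b)

lemma int_XXX (a b c : Fin d) : Integrable (fun U => X k a U * X k b U * X k c U) μ :=
  int_mul3 μ (measurable_X k a) (measurable_X k b) (measurable_X k c)
    (abs_X_le_one k a) (abs_X_le_one k b) (abs_X_le_one k c)

variable (hμ : ∀ V : UG d, μ.map (fun U => V * U) = μ)

omit [IsProbabilityMeasure μ] in
include hμ in
lemma integral_inv (V : UG d) {f : UG d → ℝ} (hf : Measurable f) :
    ∫ U, f U ∂μ = ∫ U, f (V * U) ∂μ := by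
  conv_lhs => rw [← hμ V]
  rw [integral_map (measurable_mulL V).aemeasurable hf.aestronglyMeasurable]

omit [IsProbabilityMeasure μ] in
include hμ in
lemma perm1 (σ : Equiv.Perm (Fin d)) (a : Fin d) :
    ∫ U, X k a U ∂μ = ∫ U, X k (σ a) U ∂μ := by
  refine (integral_inv μ hμ (permU σ) (measurable_X k a)).trans
    (integral_congr_ae (Filter.Eventually.of_forall fun U => ?_))
  exact X_perm k σ a U

omit [IsProbabilityMeasure μ] in
include hμ in
lemma perm2 (σ : Equiv.Perm (Fin d)) (a b : Fin d) :
    ∫ U, X k a U * X k b U ∂μ = ∫ U, X k (σ a) U * X k (σ b) U ∂μ := by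
  refine (integral_inv μ hμ (permU σ) ((measurable_X k a).mul (measurable_X k b))).trans
    (integral_congr_ae (Filter.Eventually.of_forall fun U => ?_))
  simp only [Pi.mul_apply, X_perm]

omit [IsProbabilityMeasure μ] in
include hμ in
lemma perm3 (σ : Equiv.Perm (Fin d)) (a b c : Fin d) :
    ∫ U, X k a U * X k b U * X k c U ∂μ
      = ∫ U, X k (σ a) U * X k (σ b) U * X k (σ c) U ∂μ := by
  refine (integral_inv μ hμ (permU σ)
      (((measurable_X k a).mul (measurable_X k b)).mul (measurable_X k c))).trans
    (integral_congr_ae (Filter.Eventually.of_forall fun U => ?_))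
  simp only [Pi.mul_apply, X_perm]

end Meas
end CovAux14

namespace CovAux14
section Rel
variable {d : ℕ} (k : Fin d) (μ : Measure (UG d)) [IsProbabilityMeasure μ]
variable (hμ : ∀ V : UG d, μ.map (fun U => V * U) = μ)

include hμ in
lemma rel_S (a b : Fin d) (hab : a ≠ b) :
    ∫ U, X k a U * X k a U ∂μ = 2 * ∫ U, X k a U * X k b U ∂μ := by
  set e : Fin d → UG d → ℂ := fun c U => (U : Matrix (Fin d) (Fin d) ℂ) c k with he
  set F : ℂ → UG d → ℝ := fun z U => (‖e a U + z * e b U‖^2/2) * (‖e a U + z * e b U‖^2/2)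
    with hF
  have key : ∀ (z : ℂ), z * star z = 1 →
      (∫ U, X k a U * X k a U ∂μ = ∫ U, F z U ∂μ) ∧ Integrable (F z) μ := by
    intro z hz
    constructor
    · refine (integral_inv μ hμ (mixU hab z hz)
        ((measurable_X k a).mul (measurable_X k a))).trans
        (integral_congr_ae (Filter.Eventually.of_forall fun U => ?_))
      simp only [Pi.mul_apply, X_mix hab z k hz, hF, he]
    · refine (int_mul2 μ (f := fun U => X k a (mixU hab z hz * U))
        (g := fun U => X k a (mixU hab z hz * U))
        ((measurable_X k a).comp (measurable_mulL _))
        ((measurable_X k a).comp (measurable_mulL _))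
        (fun U => abs_X_le_one k a _) (fun U => abs_X_le_one k a _)).congr
        (Filter.Eventually.of_forall fun U => ?_)
      simp only [X_mix hab z k hz, hF, he]
  have hz1 : (1:ℂ) * star 1 = 1 := by norm_num
  have hzI : Complex.I * star Complex.I = 1 := by
    simp [Complex.star_def, Complex.conj_I, Complex.I_mul_I]
  have hzm1 : (-1:ℂ) * star (-1) = 1 := by norm_num
  have hzmI : (-Complex.I) * star (-Complex.I) = 1 := by
    simp [Complex.star_def, Complex.conj_I, Complex.I_mul_I]
  obtain ⟨k1, i1⟩ := key 1 hz1
  obtain ⟨k2, i2⟩ := key Complex.I hzI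
  obtain ⟨k3, i3⟩ := key (-1) hzm1
  obtain ⟨k4, i4⟩ := key (-Complex.I) hzmI
  have hadd : ∫ U, (F 1 U + F Complex.I U + F (-1) U + F (-Complex.I) U) ∂μ
      = (∫ U, F 1 U ∂μ) + (∫ U, F Complex.I U ∂μ) + (∫ U, F (-1) U ∂μ)
        + (∫ U, F (-Complex.I) U ∂μ) := by
    have e1 := integral_add i1 i2
    have e2 := integral_add (i1.add i2) i3
    have e3 := integral_add ((i1.add i2).add i3) i4
    simp only [Pi.add_apply] at e1 e2 e3
    rw [e3, e2, e1]
  have hpt : ∀ U, F 1 U + F Complex.I U + F (-1) U + F (-Complex.I) U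
      = X k a U * X k a U + X k b U * X k b U + 4 * (X k a U * X k b U) := fun U =>
    pt2 (e a U) (e b U)
  have hrhs : ∫ U, (F 1 U + F Complex.I U + F (-1) U + F (-Complex.I) U) ∂μ
      = (∫ U, X k a U * X k a U ∂μ) + (∫ U, X k b U * X k b U ∂μ)
        + 4 * ∫ U, X k a U * X k b U ∂μ := by
    have j1 := integral_add ((int_XX k μ a a).add (int_XX k μ b b))
      ((int_XX k μ a b).const_mul (4:ℝ))
    have j2 := integral_add (int_XX k μ a a) (int_XX k μ b b)
    simp only [Pi.add_apply] at j1 j2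
    rw [integral_congr_ae (Filter.Eventually.of_forall hpt), j1, j2, integral_const_mul _ _]
  have hyy : ∫ U, X k b U * X k b U ∂μ = ∫ U, X k a U * X k a U ∂μ := by
    simpa [Equiv.swap_apply_right] using perm2 k μ hμ (Equiv.swap a b) b b
  linarith

include hμ in
lemma rel_A (a b : Fin d) (hab : a ≠ b) :
    ∫ U, X k a U * X k a U * X k a U ∂μ = 3 * ∫ U, X k a U * X k a U * X k b U ∂μ := by
  set e : Fin d → UG d → ℂ := fun c U => (U : Matrix (Fin d) (Fin d) ℂ) c k with he
  set F : ℂ → UG d → ℝ := fun z U =>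
    (‖e a U + z * e b U‖^2/2) * (‖e a U + z * e b U‖^2/2) * (‖e a U + z * e b U‖^2/2) with hF
  have key : ∀ (z : ℂ), z * star z = 1 →
      (∫ U, X k a U * X k a U * X k a U ∂μ = ∫ U, F z U ∂μ) ∧ Integrable (F z) μ := by
    intro z hz
    constructor
    · refine (integral_inv μ hμ (mixU hab z hz)
        (((measurable_X k a).mul (measurable_X k a)).mul (measurable_X k a))).trans
        (integral_congr_ae (Filter.Eventually.of_forall fun U => ?_))
      simp only [Pi.mul_apply, X_mix hab z k hz, hF, he]
    · refine (int_mul3 μ (f := fun U => X k a (mixU hab z hz * U))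
        (g := fun U => X k a (mixU hab z hz * U))
        (h := fun U => X k a (mixU hab z hz * U))
        ((measurable_X k a).comp (measurable_mulL _))
        ((measurable_X k a).comp (measurable_mulL _))
        ((measurable_X k a).comp (measurable_mulL _))
        (fun U => abs_X_le_one k a _) (fun U => abs_X_le_one k a _)
        (fun U => abs_X_le_one k a _)).congr
        (Filter.Eventually.of_forall fun U => ?_)
      simp only [X_mix hab z k hz, hF, he]
  have hz1 : (1:ℂ) * star 1 = 1 := by norm_num
  have hzI : Complex.I * star Complex.I = 1 := by
    simp [Complex.star_def, Complex.conj_I, Complex.I_mul_I]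
  have hzm1 : (-1:ℂ) * star (-1) = 1 := by norm_num
  have hzmI : (-Complex.I) * star (-Complex.I) = 1 := by
    simp [Complex.star_def, Complex.conj_I, Complex.I_mul_I]
  obtain ⟨k1, i1⟩ := key 1 hz1
  obtain ⟨k2, i2⟩ := key Complex.I hzI
  obtain ⟨k3, i3⟩ := key (-1) hzm1
  obtain ⟨k4, i4⟩ := key (-Complex.I) hzmI
  have hadd : ∫ U, (F 1 U + F Complex.I U + F (-1) U + F (-Complex.I) U) ∂μ
      = (∫ U, F 1 U ∂μ) + (∫ U, F Complex.I U ∂μ) + (∫ U, F (-1) U ∂μ)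
        + (∫ U, F (-Complex.I) U ∂μ) := by
    have e1 := integral_add i1 i2
    have e2 := integral_add (i1.add i2) i3
    have e3 := integral_add ((i1.add i2).add i3) i4
    simp only [Pi.add_apply] at e1 e2 e3
    rw [e3, e2, e1]
  have hpt : ∀ U, F 1 U + F Complex.I U + F (-1) U + F (-Complex.I) U
      = (1/2) * (X k a U * X k a U * X k a U) + (1/2) * (X k b U * X k b U * X k b U)
        + (9/2) * (X k a U * X k a U * X k b U)
        + (9/2) * (X k a U * X k b U * X k b U) := fun U => pt3 (e a U) (e b U)
  have hrhs : ∫ U, (F 1 U + F Complex.I U + F (-1) U + F (-Complex.I) U) ∂μ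
      = (1/2) * (∫ U, X k a U * X k a U * X k a U ∂μ)
        + (1/2) * (∫ U, X k b U * X k b U * X k b U ∂μ)
        + (9/2) * (∫ U, X k a U * X k a U * X k b U ∂μ)
        + (9/2) * (∫ U, X k a U * X k b U * X k b U ∂μ) := by
    have j3 := integral_add ((int_XXX k μ a a a).const_mul (1/2:ℝ))
      ((int_XXX k μ b b b).const_mul (1/2:ℝ))
    have j2 := integral_add (((int_XXX k μ a a a).const_mul (1/2:ℝ)).add
      ((int_XXX k μ b b b).const_mul (1/2:ℝ))) ((int_XXX k μ a a b).const_mul (9/2:ℝ))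
    have j1 := integral_add ((((int_XXX k μ a a a).const_mul (1/2:ℝ)).add
      ((int_XXX k μ b b b).const_mul (1/2:ℝ))).add ((int_XXX k μ a a b).const_mul (9/2:ℝ)))
      ((int_XXX k μ a b b).const_mul (9/2:ℝ))
    simp only [Pi.add_apply] at j1 j2 j3
    rw [integral_congr_ae (Filter.Eventually.of_forall hpt), j1, j2, j3,
      integral_const_mul _ _, integral_const_mul _ _, integral_const_mul _ _, integral_const_mul _ _]
  have hyyy : ∫ U, X k b U * X k b U * X k b U ∂μ = ∫ U, X k a U * X k a U * X k a U ∂μ := by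
    simpa [Equiv.swap_apply_right] using perm3 k μ hμ (Equiv.swap a b) b b b
  have hxyy : ∫ U, X k a U * X k b U * X k b U ∂μ
      = ∫ U, X k a U * X k a U * X k b U ∂μ := by
    have h1 := perm3 k μ hμ (Equiv.swap a b) a a b
    simp only [Equiv.swap_apply_left, Equiv.swap_apply_right] at h1
    have h2 : ∫ U, X k b U * X k b U * X k a U ∂μ = ∫ U, X k a U * X k b U * X k b U ∂μ :=
      integral_congr_ae (Filter.Eventually.of_forall fun U => by ring)
    linarith
  linarith

end Rel
end CovAux14

namespace CovAux14
section Mom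
variable {d : ℕ} (k : Fin d) (μ : Measure (UG d)) [IsProbabilityMeasure μ]
variable (hμ : ∀ V : UG d, μ.map (fun U => V * U) = μ)

include hμ in
lemma moment1 (a : Fin d) : ∫ U, X k a U ∂μ = 1 / d := by
  have hd0 : 0 < d := a.pos
  have hdne : (d:ℝ) ≠ 0 := Nat.cast_ne_zero.2 hd0.ne'
  have h1 : ∫ U, (1:ℝ) ∂μ = 1 := by simp
  have h2 : ∫ U, (1:ℝ) ∂μ = ∑ c, ∫ U, X k c U ∂μ := by
    rw [← integral_finset_sum _ (fun c _ => int_X k μ c)]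
    exact integral_congr_ae (Filter.Eventually.of_forall fun U => (sum_X k U).symm)
  have h3 : ∀ c : Fin d, ∫ U, X k c U ∂μ = ∫ U, X k a U ∂μ := fun c => by
    simpa [Equiv.swap_apply_left] using perm1 k μ hμ (Equiv.swap c a) c
  rw [h1, Finset.sum_congr rfl (fun c _ => h3 c), Finset.sum_const, Finset.card_univ,
    Fintype.card_fin, nsmul_eq_mul] at h2
  rw [eq_div_iff hdne]
  linarith

include hμ in
lemma moment2 (a b : Fin d) (hab : a ≠ b) :
    ∫ U, X k a U * X k b U ∂μ = 1 / ((d:ℝ) * ((d:ℝ)+1)) := by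
  have hd0 : 0 < d := a.pos
  have hdne : (d:ℝ) ≠ 0 := Nat.cast_ne_zero.2 hd0.ne'
  have hd0' : (0:ℝ) < d := by exact_mod_cast hd0
  have e1 : ∫ U, X k a U ∂μ = ∑ c, ∫ U, X k a U * X k c U ∂μ := by
    rw [← integral_finset_sum _ (fun c _ => int_XX k μ a c)]
    refine integral_congr_ae (Filter.Eventually.of_forall fun U => ?_)
    show X k a U = ∑ e : Fin d, X k a U * X k e U
    rw [← Finset.mul_sum, sum_X, mul_one]
  rw [← Finset.add_sum_erase _ _ (Finset.mem_univ a)] at e1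
  have e2 : ∀ c ∈ Finset.univ.erase a,
      ∫ U, X k a U * X k c U ∂μ = ∫ U, X k a U * X k b U ∂μ := by
    intro c hc
    have hca : c ≠ a := (Finset.mem_erase.1 hc).1
    have := perm2 k μ hμ (Equiv.swap c b) a c
    rwa [Equiv.swap_apply_left, Equiv.swap_apply_of_ne_of_ne (Ne.symm hca) hab] at this
  rw [Finset.sum_congr rfl e2, Finset.sum_const, Finset.card_erase_of_mem (Finset.mem_univ a),
    Finset.card_univ, Fintype.card_fin, nsmul_eq_mul, Nat.cast_sub hd0, Nat.cast_one] at e1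
  have e3 := rel_S k μ hμ a b hab
  have e4 := moment1 k μ hμ a
  have h1 : ((d:ℝ)+1) * (∫ U, X k a U * X k b U ∂μ) = 1 / d := by
    rw [← e4, e1, e3]; ring
  have h2 : ((d:ℝ)+1) * (1 / ((d:ℝ) * ((d:ℝ)+1))) = 1 / d := by
    field_simp
  exact mul_left_cancel₀ (by positivity) (h1.trans h2.symm)

include hμ in
lemma moment21 (a b : Fin d) (hab : a ≠ b) :
    ∫ U, X k a U * X k b U * X k b U ∂μ = 2 / ((d:ℝ) * ((d:ℝ)+1) * ((d:ℝ)+2)) := by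
  have hd0 : 0 < d := a.pos
  have hdne : (d:ℝ) ≠ 0 := Nat.cast_ne_zero.2 hd0.ne'
  have hd0' : (0:ℝ) < d := by exact_mod_cast hd0
  have e1 : ∫ U, X k b U * X k b U ∂μ = ∑ c, ∫ U, X k b U * X k b U * X k c U ∂μ := by
    rw [← integral_finset_sum _ (fun c _ => int_XXX k μ b b c)]
    refine integral_congr_ae (Filter.Eventually.of_forall fun U => ?_)
    show X k b U * X k b U = ∑ e : Fin d, X k b U * X k b U * X k e U
    rw [← Finset.mul_sum, sum_X, mul_one]
  rw [← Finset.add_sum_erase _ _ (Finset.mem_univ b)] at e1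
  have e2 : ∀ c ∈ Finset.univ.erase b,
      ∫ U, X k b U * X k b U * X k c U ∂μ = ∫ U, X k b U * X k b U * X k a U ∂μ := by
    intro c hc
    have hcb : c ≠ b := (Finset.mem_erase.1 hc).1
    have := perm3 k μ hμ (Equiv.swap c a) b b c
    rwa [Equiv.swap_apply_left,
      Equiv.swap_apply_of_ne_of_ne (Ne.symm hcb) (Ne.symm hab)] at this
  rw [Finset.sum_congr rfl e2, Finset.sum_const, Finset.card_erase_of_mem (Finset.mem_univ b),
    Finset.card_univ, Fintype.card_fin, nsmul_eq_mul, Nat.cast_sub hd0, Nat.cast_one] at e1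
  have e3 := rel_A k μ hμ b a (Ne.symm hab)
  have e4 := rel_S k μ hμ b a (Ne.symm hab)
  have e5 : ∫ U, X k b U * X k a U ∂μ = ∫ U, X k a U * X k b U ∂μ :=
    integral_congr_ae (Filter.Eventually.of_forall fun U => by ring)
  have e6 := moment2 k μ hμ a b hab
  have e7 : ∫ U, X k a U * X k b U * X k b U ∂μ = ∫ U, X k b U * X k b U * X k a U ∂μ :=
    integral_congr_ae (Filter.Eventually.of_forall fun U => by ring)
  have h1 : ((d:ℝ)+2) * (∫ U, X k b U * X k b U * X k a U ∂μ)
      = 2 / ((d:ℝ) * ((d:ℝ)+1)) := by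
    linear_combination (-1 : ℝ) * e1 - e3 + e4 + 2*e5 + 2*e6
  have h2 : ((d:ℝ)+2) * (2 / ((d:ℝ) * ((d:ℝ)+1) * ((d:ℝ)+2)))
      = 2 / ((d:ℝ) * ((d:ℝ)+1)) := by
    field_simp
  rw [e7]
  exact mul_left_cancel₀ (by positivity) (h1.trans h2.symm)

include hμ in
lemma moment111 (a b c : Fin d) (hab : a ≠ b) (hac : a ≠ c) (hbc : b ≠ c) :
    ∫ U, X k a U * X k b U * X k c U ∂μ
      = 1 / ((d:ℝ) * ((d:ℝ)+1) * ((d:ℝ)+2)) := by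
  have hd0 : 0 < d := a.pos
  have hdne : (d:ℝ) ≠ 0 := Nat.cast_ne_zero.2 hd0.ne'
  have hd0' : (0:ℝ) < d := by exact_mod_cast hd0
  have hd3 : 3 ≤ d := by
    have h3 : ({a, b, c} : Finset (Fin d)).card = 3 := by
      rw [Finset.card_insert_of_notMem (by simp [hab, hac]),
        Finset.card_insert_of_notMem (by simp [hbc]), Finset.card_singleton]
    calc 3 = ({a, b, c} : Finset (Fin d)).card := h3.symm
    _ ≤ (Finset.univ : Finset (Fin d)).card := Finset.card_le_univ _
    _ = d := by rw [Finset.card_univ, Fintype.card_fin]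
  have hd3' : (3:ℝ) ≤ (d:ℝ) := by exact_mod_cast hd3
  have e1 : ∫ U, X k a U * X k b U ∂μ = ∑ e, ∫ U, X k a U * X k b U * X k e U ∂μ := by
    rw [← integral_finset_sum _ (fun e _ => int_XXX k μ a b e)]
    refine integral_congr_ae (Filter.Eventually.of_forall fun U => ?_)
    show X k a U * X k b U = ∑ e : Fin d, X k a U * X k b U * X k e U
    rw [← Finset.mul_sum, sum_X, mul_one]
  have hbmem : b ∈ Finset.univ.erase a := Finset.mem_erase.2 ⟨Ne.symm hab, Finset.mem_univ b⟩
  rw [← Finset.add_sum_erase _ _ (Finset.mem_univ a), ← Finset.add_sum_erase _ _ hbmem] at e1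
  have e2 : ∀ e ∈ (Finset.univ.erase a).erase b,
      ∫ U, X k a U * X k b U * X k e U ∂μ = ∫ U, X k a U * X k b U * X k c U ∂μ := by
    intro e he
    have heb : e ≠ b := (Finset.mem_erase.1 he).1
    have hea : e ≠ a := (Finset.mem_erase.1 (Finset.mem_erase.1 he).2).1
    have := perm3 k μ hμ (Equiv.swap e c) a b e
    rwa [Equiv.swap_apply_left, Equiv.swap_apply_of_ne_of_ne (Ne.symm hea) hac,
      Equiv.swap_apply_of_ne_of_ne (Ne.symm heb) hbc] at this
  rw [Finset.sum_congr rfl e2, Finset.sum_const, Finset.card_erase_of_mem hbmem,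
    Finset.card_erase_of_mem (Finset.mem_univ a), Finset.card_univ, Fintype.card_fin,
    nsmul_eq_mul] at e1
  have hcast : ((d - 1 - 1 : ℕ) : ℝ) = (d:ℝ) - 2 := by
    have : d - 1 - 1 = d - 2 := by omega
    rw [this, Nat.cast_sub (by omega)]
    norm_num
  rw [hcast] at e1
  have hFa : ∫ U, X k a U * X k b U * X k a U ∂μ
      = 2 / ((d:ℝ) * ((d:ℝ)+1) * ((d:ℝ)+2)) := by
    rw [show ∫ U, X k a U * X k b U * X k a U ∂μ = ∫ U, X k b U * X k a U * X k a U ∂μ from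
      integral_congr_ae (Filter.Eventually.of_forall fun U => by ring)]
    exact moment21 k μ hμ b a (Ne.symm hab)
  have hFb : ∫ U, X k a U * X k b U * X k b U ∂μ
      = 2 / ((d:ℝ) * ((d:ℝ)+1) * ((d:ℝ)+2)) := moment21 k μ hμ a b hab
  have hP := moment2 k μ hμ a b hab
  have h1 : ((d:ℝ)-2) * (∫ U, X k a U * X k b U * X k c U ∂μ)
      = 1 / ((d:ℝ) * ((d:ℝ)+1)) - 4 / ((d:ℝ) * ((d:ℝ)+1) * ((d:ℝ)+2)) := by
    linear_combination (-1 : ℝ) * e1 + hP - hFa - hFb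
  have h2 : ((d:ℝ)-2) * (1 / ((d:ℝ) * ((d:ℝ)+1) * ((d:ℝ)+2)))
      = 1 / ((d:ℝ) * ((d:ℝ)+1)) - 4 / ((d:ℝ) * ((d:ℝ)+1) * ((d:ℝ)+2)) := by
    field_simp
    ring
  exact mul_left_cancel₀ (by linarith : ((d:ℝ)-2) ≠ 0) (h1.trans h2.symm)

end Mom
end CovAux14

namespace CovAux14
section Fin4
variable {d : ℕ} (k : Fin d) (μ : Measure (UG d)) [IsProbabilityMeasure μ]

lemma card_filter_lt (r : ℕ) (hrd : r ≤ d) :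
    (Finset.univ.filter fun l : Fin d => (l : ℕ) < r).card = r := by
  apply Finset.card_eq_of_bijective (fun m hm => (⟨m, lt_of_lt_of_le hm hrd⟩ : Fin d))
  · intro a ha
    exact ⟨(a : ℕ), (Finset.mem_filter.1 ha).2, Fin.eta a _⟩
  · intro m hm
    simpa using hm
  · intro m m' hm hm' h
    simpa [Fin.ext_iff] using h
lemma rho_entry (r : ℕ) (U : UG d) :
    ((star (U : Matrix (Fin d) (Fin d) ℂ) * rhoR d r * (U : Matrix (Fin d) (Fin d) ℂ)) k k).re
      = (r : ℝ)⁻¹ * ∑ l : Fin d, (if (l : ℕ) < r then X k l U else 0) := by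
  set A := star (U : Matrix (Fin d) (Fin d) ℂ) with hA
  set B := (U : Matrix (Fin d) (Fin d) ℂ) with hB
  have h1 : ∀ i : Fin d, (A * Matrix.single i i (1:ℂ) * B) k k
      = star (B i k) * B i k := by
    intro i
    rw [Matrix.mul_apply, Finset.sum_eq_single i (fun p _ hpi => by
      rw [Matrix.mul_single_apply_of_ne _ _ _ _ _ hpi, zero_mul])
      (fun h => absurd (Finset.mem_univ i) h)]
    rw [Matrix.mul_single_apply_same, mul_one, hA, Matrix.star_apply]
  rw [rhoR, Matrix.mul_smul, Matrix.smul_mul, Matrix.smul_apply, smul_eq_mul,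
    Matrix.mul_sum, Matrix.sum_mul, Matrix.sum_apply]
  have h2 : ∀ i : Fin d,
      (A * (if (i : ℕ) < r then Matrix.single i i (1:ℂ) else 0) * B) k k
      = if (i : ℕ) < r then star (B i k) * B i k else 0 := by
    intro i
    by_cases hi : (i : ℕ) < r
    · rw [if_pos hi, if_pos hi, h1]
    · rw [if_neg hi, if_neg hi, Matrix.mul_zero, Matrix.zero_mul]
      rfl
  rw [Finset.sum_congr rfl (fun i _ => h2 i)]
  rw [show ((r : ℂ))⁻¹ = (((r : ℝ)⁻¹ : ℝ) : ℂ) by simp, Complex.re_ofReal_mul]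
  congr 1
  rw [Complex.re_sum]
  refine Finset.sum_congr rfl fun i _ => ?_
  by_cases hi : (i : ℕ) < r
  · rw [if_pos hi, if_pos hi, Complex.star_def, mul_comm, Complex.mul_conj]
    simp [X, hB, Complex.normSq_eq_norm_sq, ← Complex.ofReal_pow]
  · rw [if_neg hi, if_neg hi, Complex.zero_re]

lemma int_combo (l i j : Fin d) (c1 c2 c3 c4 : ℝ) :
    ∫ U, (c1 * (X k l U * X k i U * X k j U) + c2 * (X k l U * X k i U)
      + c3 * (X k l U * X k j U) + c4 * X k l U) ∂μ
    = c1 * (∫ U, X k l U * X k i U * X k j U ∂μ) + c2 * (∫ U, X k l U * X k i U ∂μ)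
      + c3 * (∫ U, X k l U * X k j U ∂μ) + c4 * ∫ U, X k l U ∂μ := by
  have j3 := integral_add ((int_XXX k μ l i j).const_mul c1) ((int_XX k μ l i).const_mul c2)
  have j2 := integral_add (((int_XXX k μ l i j).const_mul c1).add
    ((int_XX k μ l i).const_mul c2)) ((int_XX k μ l j).const_mul c3)
  have j1 := integral_add ((((int_XXX k μ l i j).const_mul c1).add
    ((int_XX k μ l i).const_mul c2)).add ((int_XX k μ l j).const_mul c3))
    ((int_X k μ l).const_mul c4)
  simp only [Pi.add_apply] at j1 j2 j3
  rw [j1, j2, j3, integral_const_mul _ _, integral_const_mul _ _, integral_const_mul _ _,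
    integral_const_mul _ _]

variable (hμ : ∀ V : UG d, μ.map (fun U => V * U) = μ)

include hμ in
lemma core (r : ℕ) (hr : 1 ≤ r) (hrd : r ≤ d) (i j : Fin d)
    (hri : r ≤ (i : ℕ)) (hrj : r ≤ (j : ℕ)) (T : ℝ)
    (hT : ∀ l : Fin d, (l : ℕ) < r → ∫ U, X k l U * X k i U * X k j U ∂μ = T) :
    ∫ U, ((star (U : Matrix (Fin d) (Fin d) ℂ) * rhoR d r
          * (U : Matrix (Fin d) (Fin d) ℂ)) k k).re
        * ((((d:ℝ)+1) * X k i U - 1) * (((d:ℝ)+1) * X k j U - 1)) ∂μ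
      = ((d:ℝ)+1)^2 * T - 2*((d:ℝ)+1) * (1/((d:ℝ)*((d:ℝ)+1))) + 1/(d:ℝ) := by
  have hrne : (r : ℝ) ≠ 0 := Nat.cast_ne_zero.2 (by omega)
  have hpt : ∀ U : UG d,
      ((star (U : Matrix (Fin d) (Fin d) ℂ) * rhoR d r
          * (U : Matrix (Fin d) (Fin d) ℂ)) k k).re
        * ((((d:ℝ)+1) * X k i U - 1) * (((d:ℝ)+1) * X k j U - 1))
      = ∑ l : Fin d, (if (l : ℕ) < r then
          ((r:ℝ)⁻¹*((d:ℝ)+1)^2) * (X k l U * X k i U * X k j U)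
          + (-((r:ℝ)⁻¹*((d:ℝ)+1))) * (X k l U * X k i U)
          + (-((r:ℝ)⁻¹*((d:ℝ)+1))) * (X k l U * X k j U)
          + (r:ℝ)⁻¹ * X k l U else 0) := by
    intro U
    rw [rho_entry k r U, mul_assoc, Finset.sum_mul, Finset.mul_sum]
    refine Finset.sum_congr rfl fun l _ => ?_
    by_cases hl : (l : ℕ) < r
    · simp only [hl, if_true]
      ring
    · simp [hl]
  have hli : ∀ l : Fin d, (l : ℕ) < r → l ≠ i :=
    fun l hl h => absurd (h ▸ hl) (not_lt.2 hri)
  have hlj : ∀ l : Fin d, (l : ℕ) < r → l ≠ j :=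
    fun l hl h => absurd (h ▸ hl) (not_lt.2 hrj)
  have hint : ∀ l : Fin d, l ∈ Finset.univ → Integrable (fun U => if (l : ℕ) < r then
      ((r:ℝ)⁻¹*((d:ℝ)+1)^2) * (X k l U * X k i U * X k j U)
      + (-((r:ℝ)⁻¹*((d:ℝ)+1))) * (X k l U * X k i U)
      + (-((r:ℝ)⁻¹*((d:ℝ)+1))) * (X k l U * X k j U)
      + (r:ℝ)⁻¹ * X k l U else 0) μ := by
    intro l _
    by_cases hl : (l : ℕ) < r
    · simp only [hl, if_true]
      exact ((((int_XXX k μ l i j).const_mul ((r:ℝ)⁻¹*((d:ℝ)+1)^2)).add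
        ((int_XX k μ l i).const_mul (-((r:ℝ)⁻¹*((d:ℝ)+1))))).add
        ((int_XX k μ l j).const_mul (-((r:ℝ)⁻¹*((d:ℝ)+1))))).add
        ((int_X k μ l).const_mul ((r:ℝ)⁻¹))
    · simp only [hl, if_false]
      exact integrable_const 0
  rw [integral_congr_ae (Filter.Eventually.of_forall hpt)]
  rw [integral_finset_sum _ hint]
  have hval : ∀ l : Fin d,
      (∫ U, (if (l : ℕ) < r then
          ((r:ℝ)⁻¹*((d:ℝ)+1)^2) * (X k l U * X k i U * X k j U)
          + (-((r:ℝ)⁻¹*((d:ℝ)+1))) * (X k l U * X k i U)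
          + (-((r:ℝ)⁻¹*((d:ℝ)+1))) * (X k l U * X k j U)
          + (r:ℝ)⁻¹ * X k l U else 0) ∂μ)
      = if (l : ℕ) < r then
          ((r:ℝ)⁻¹*((d:ℝ)+1)^2) * T + (-((r:ℝ)⁻¹*((d:ℝ)+1))) * (1/((d:ℝ)*((d:ℝ)+1)))
          + (-((r:ℝ)⁻¹*((d:ℝ)+1))) * (1/((d:ℝ)*((d:ℝ)+1))) + (r:ℝ)⁻¹ * (1/(d:ℝ)) else 0 := by
    intro l
    by_cases hl : (l : ℕ) < r
    · simp only [hl, if_true]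
      rw [int_combo k μ l i j, hT l hl, moment2 k μ hμ l i (hli l hl),
        moment2 k μ hμ l j (hlj l hl), moment1 k μ hμ l]
    · simp [hl]
  rw [Finset.sum_congr rfl (fun l _ => hval l), ← Finset.sum_filter, Finset.sum_const,
    card_filter_lt r hrd, nsmul_eq_mul]
  have hdne : (d:ℝ) ≠ 0 := Nat.cast_ne_zero.2 i.pos.ne'
  field_simp
  ring

end Fin4
end CovAux14

/-- Diagonal variance and covariance of the `C` block of the
covariant-measurement LS estimator for `ρ_r`: for `r < i ≤ d`,
`d·∫ ⟨e_k, U*ρ_r U e_k⟩·((d+1)|U_{ik}|² − 1)² dU = d/(d+2)`, and for distinct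
`r < i, j ≤ d` (when `r ≤ d−2`),
`d·∫ ⟨e_k, U*ρ_r U e_k⟩·((d+1)|U_{ik}|² − 1)((d+1)|U_{jk}|² − 1) dU = −1/(d+2)`. -/
theorem covariant_ls_C_diagonal_variance_covariance
    (d r : ℕ) (hd : 2 ≤ d) (hr : 1 ≤ r) (hrd : r < d)
    (μ : Measure (Matrix.unitaryGroup (Fin d) ℂ)) [IsProbabilityMeasure μ]
    (hμ : ∀ V : Matrix.unitaryGroup (Fin d) ℂ, μ.map (fun U => V * U) = μ)
    (k : Fin d) :
    (∀ i : Fin d, r ≤ (i : ℕ) →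
      (d : ℝ) * ∫ U,
          ((star (U : Matrix (Fin d) (Fin d) ℂ) * rhoR d r * (U : Matrix (Fin d) (Fin d) ℂ)) k k).re *
          (((d : ℝ) + 1) * ‖(U : Matrix (Fin d) (Fin d) ℂ) i k‖ ^ 2 - 1) ^ 2 ∂μ
        = (d : ℝ) / ((d : ℝ) + 2)) ∧
    (r + 2 ≤ d → ∀ i j : Fin d, i ≠ j → r ≤ (i : ℕ) → r ≤ (j : ℕ) →
      (d : ℝ) * ∫ U,
          ((star (U : Matrix (Fin d) (Fin d) ℂ) * rhoR d r * (U : Matrix (Fin d) (Fin d) ℂ)) k k).re *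
          ((((d : ℝ) + 1) * ‖(U : Matrix (Fin d) (Fin d) ℂ) i k‖ ^ 2 - 1) *
            (((d : ℝ) + 1) * ‖(U : Matrix (Fin d) (Fin d) ℂ) j k‖ ^ 2 - 1)) ∂μ
        = -1 / ((d : ℝ) + 2)) := by
  constructor
  · intro i hri
    have hT : ∀ l : Fin d, (l : ℕ) < r →
        ∫ U, CovAux14.X k l U * CovAux14.X k i U * CovAux14.X k i U ∂μ
          = 2 / ((d:ℝ) * ((d:ℝ)+1) * ((d:ℝ)+2)) := fun l hl =>
      CovAux14.moment21 k μ hμ l i (fun h => absurd (h ▸ hl) (not_lt.2 hri))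
    have hc := CovAux14.core k μ hμ r hr (le_of_lt hrd) i i hri hri _ hT
    have hb : ∫ U,
        ((star (U : Matrix (Fin d) (Fin d) ℂ) * rhoR d r * (U : Matrix (Fin d) (Fin d) ℂ)) k k).re *
          (((d : ℝ) + 1) * ‖(U : Matrix (Fin d) (Fin d) ℂ) i k‖ ^ 2 - 1) ^ 2 ∂μ
        = ∫ U,
        ((star (U : Matrix (Fin d) (Fin d) ℂ) * rhoR d r * (U : Matrix (Fin d) (Fin d) ℂ)) k k).re *
          ((((d:ℝ)+1) * CovAux14.X k i U - 1) * (((d:ℝ)+1) * CovAux14.X k i U - 1)) ∂μ := by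
      refine integral_congr_ae (Filter.Eventually.of_forall fun U => ?_)
      simp only [CovAux14.X]
      ring
    rw [hb, hc]
    have hdne : (d:ℝ) ≠ 0 := Nat.cast_ne_zero.2 (by omega)
    field_simp
    ring
  · intro hr2 i j hij hri hrj
    have hT : ∀ l : Fin d, (l : ℕ) < r →
        ∫ U, CovAux14.X k l U * CovAux14.X k i U * CovAux14.X k j U ∂μ
          = 1 / ((d:ℝ) * ((d:ℝ)+1) * ((d:ℝ)+2)) := fun l hl =>
      CovAux14.moment111 k μ hμ l i j (fun h => absurd (h ▸ hl) (not_lt.2 hri))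
        (fun h => absurd (h ▸ hl) (not_lt.2 hrj)) hij
    have hc := CovAux14.core k μ hμ r hr (le_of_lt hrd) i j hri hrj _ hT
    have hb : ∫ U,
        ((star (U : Matrix (Fin d) (Fin d) ℂ) * rhoR d r * (U : Matrix (Fin d) (Fin d) ℂ)) k k).re *
          ((((d : ℝ) + 1) * ‖(U : Matrix (Fin d) (Fin d) ℂ) i k‖ ^ 2 - 1) *
            (((d : ℝ) + 1) * ‖(U : Matrix (Fin d) (Fin d) ℂ) j k‖ ^ 2 - 1)) ∂μ
        = ∫ U,
        ((star (U : Matrix (Fin d) (Fin d) ℂ) * rhoR d r * (U : Matrix (Fin d) (Fin d) ℂ)) k k).re *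
          ((((d:ℝ)+1) * CovAux14.X k i U - 1) * (((d:ℝ)+1) * CovAux14.X k j U - 1)) ∂μ := by
      refine integral_congr_ae (Filter.Eventually.of_forall fun U => ?_)
      simp only [CovAux14.X]
    rw [hb, hc]
    have hdne : (d:ℝ) ≠ 0 := Nat.cast_ne_zero.2 (by omega)
    field_simp
    ring
end
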